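/- arXiv:1210.8113 — 2 statements merged into one kernel-verified Lean document; each statement's English description precedes it below -/
import Mathlib

section
/- If G1 and G2 are planar 3-trees sharing exactly one edge ab (and its endpoints), where ab lies on the outer face triangle abc of G1 and on a face triangle abx of G2, then the union of G1 and G2 together with the additional edge xc is a planar 3-tree. -/
open SimpleGraph

/-- A finite-style graph: a subgraph of the complete graph on `ℕ`,
i.e. a graph together with its vertex set `verts ⊆ ℕ`. -/
abbrev FGraph := SimpleGraph.Subgraph (⊤ : SimpleGraph ℕ)

/-- The complete graph on the vertex set `s`. -/
def cliqueGraph (s : Finset ℕ) : FGraph where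
  verts := ↑s
  Adj u v := u ∈ s ∧ v ∈ s ∧ u ≠ v
  adj_sub h := h.2.2
  edge_vert h := h.1
  symm := ⟨fun u v h => ⟨h.2.1, h.1, h.2.2.symm⟩⟩

/-- Add a new vertex `v` to `G`, joined to the vertices of `s` (which are in `G`). -/
def addVertex (G : FGraph) (v : ℕ) (s : Finset ℕ) : FGraph where
  verts := insert v G.verts
  Adj x y := G.Adj x y ∨ (x = v ∧ y ≠ v ∧ y ∈ s ∧ y ∈ G.verts)
    ∨ (y = v ∧ x ≠ v ∧ x ∈ s ∧ x ∈ G.verts)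
  adj_sub h := by
    rcases h with h | h | h
    · exact G.adj_sub h
    · exact fun e => h.2.1 (by rw [← e, h.1])
    · exact fun e => h.2.1 (by rw [e, h.1])
  edge_vert h := by
    rcases h with h | h | h
    · exact Set.mem_insert_of_mem _ (G.edge_vert h)
    · exact h.1 ▸ Set.mem_insert _ _
    · exact Set.mem_insert_of_mem _ h.2.2.2
  symm := ⟨fun x y h => by
    rcases h with h | h | h
    · exact Or.inl (G.adj_symm h)
    · exact Or.inr (Or.inr h)
    · exact Or.inr (Or.inl h)⟩

/-- `s` is a clique (of pairwise adjacent vertices) in `G`. -/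
def IsCliqueIn (G : FGraph) (s : Finset ℕ) : Prop :=
  ↑s ⊆ G.verts ∧ ∀ u ∈ s, ∀ v ∈ s, u ≠ v → G.Adj u v

/-- `k`-trees: start from a `k`-clique and repeatedly add a vertex joined to an
existing `k`-clique. -/
inductive IsKTree (k : ℕ) : FGraph → Prop
  | base (s : Finset ℕ) (hs : s.card = k) : IsKTree k (cliqueGraph s)
  | grow (G : FGraph) (hG : IsKTree k G) (s : Finset ℕ) (hs : s.card = k)
      (hclique : IsCliqueIn G s) (v : ℕ) (hv : v ∉ G.verts) :
      IsKTree k (addVertex G v s)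

/-- A partial `k`-tree is a subgraph of a `k`-tree. -/
def IsPartialKTree (k : ℕ) (G : FGraph) : Prop := ∃ H : FGraph, IsKTree k H ∧ G ≤ H

/-- Add the single edge `uv` (and its endpoints) to `G`. -/
def addEdge (G : FGraph) (u v : ℕ) : FGraph where
  verts := insert u (insert v G.verts)
  Adj x y := G.Adj x y ∨ (x = u ∧ y = v ∧ u ≠ v) ∨ (x = v ∧ y = u ∧ u ≠ v)
  adj_sub h := by
    rcases h with h | h | h
    · exact G.adj_sub h
    · exact fun e => h.2.2 (by rw [← h.1, ← h.2.1, e])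
    · exact fun e => h.2.2 (by rw [← h.1, ← h.2.1, e])
  edge_vert h := by
    rcases h with h | h | h
    · exact Set.mem_insert_of_mem _ (Set.mem_insert_of_mem _ (G.edge_vert h))
    · exact h.1 ▸ Set.mem_insert _ _
    · exact h.1 ▸ Set.mem_insert_of_mem _ (Set.mem_insert _ _)
  symm := ⟨fun x y h => by
    rcases h with h | h | h
    · exact Or.inl (G.adj_symm h)
    · exact Or.inr (Or.inr ⟨h.2.1, h.1, h.2.2⟩)
    · exact Or.inr (Or.inl ⟨h.2.1, h.1, h.2.2⟩)⟩

/-- `G` is a minor of `H`: there are pairwise disjoint nonempty connected branch sets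
in `H`, one for each vertex of `G`, with an `H`-edge between the branch sets of any
two `G`-adjacent vertices. -/
def IsMinor (G H : FGraph) : Prop :=
  ∃ β : ℕ → Finset ℕ,
    (∀ u ∈ G.verts, (β u).Nonempty ∧ ↑(β u) ⊆ H.verts ∧ (H.induce ↑(β u)).coe.Connected) ∧
    (∀ u ∈ G.verts, ∀ v ∈ G.verts, u ≠ v → Disjoint (β u) (β v)) ∧
    (∀ u v, G.Adj u v → ∃ x ∈ β u, ∃ y ∈ β v, H.Adj x y)

/-- The complete graph `K₅`. -/
def K5g : FGraph := cliqueGraph {0, 1, 2, 3, 4}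

/-- The complete bipartite graph `K₃,₃` with parts `{0,1,2}` and `{3,4,5}`. -/
def K33g : FGraph where
  verts := {n : ℕ | n < 6}
  Adj u v := (u < 3 ∧ 3 ≤ v ∧ v < 6) ∨ (v < 3 ∧ 3 ≤ u ∧ u < 6)
  adj_sub := fun {u v} h => by rcases h with h | h <;> exact show u ≠ v by omega
  edge_vert := fun {u v} h => by rcases h with h | h <;> exact show u < 6 by omega
  symm := ⟨fun u v h => by tauto⟩

/-- Planarity via Wagner's theorem: no `K₅` and no `K₃,₃` minor. -/
def Planar (G : FGraph) : Prop := ¬ IsMinor K5g G ∧ ¬ IsMinor K33g G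

/-- In a maximal planar graph (planar triangulation), the triangle `abc` bounds a face:
combinatorially, a new vertex can be placed inside it and joined to `a`, `b`, `c`
while preserving planarity. -/
def IsFaceTriangle (G : FGraph) (a b c : ℕ) : Prop :=
  G.Adj a b ∧ G.Adj b c ∧ G.Adj a c ∧
  ∀ v, v ∉ G.verts → Planar (addVertex G v {a, b, c})

/-- A perfect elimination scheme witnessing that `H` is a `k`-tree: a listing of the
vertices of `H` whose first `k` entries form a clique and each later entry has exactly
`k` earlier neighbours, which form a clique. -/
def IsPESk (k : ℕ) (l : List ℕ) (H : FGraph) : Prop :=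
  l.Nodup ∧ H.verts = {v | v ∈ l} ∧ k ≤ l.length ∧
  (∀ i j : Fin l.length, (i : ℕ) < k → (j : ℕ) < k → i ≠ j → H.Adj (l.get i) (l.get j)) ∧
  (∀ i : Fin l.length, k ≤ (i : ℕ) →
    ∃ s : Finset (Fin l.length), s.card = k ∧ (∀ j ∈ s, (j : ℕ) < (i : ℕ)) ∧
      (∀ a ∈ s, ∀ b ∈ s, a ≠ b → H.Adj (l.get a) (l.get b)) ∧
      (∀ j : Fin l.length, (j : ℕ) < (i : ℕ) → (H.Adj (l.get j) (l.get i) ↔ j ∈ s)))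

/-- A vertex is simplicial if its neighbourhood induces a clique. -/
def IsSimplicial (G : FGraph) (v : ℕ) : Prop :=
  v ∈ G.verts ∧ ∀ u w, G.Adj v u → G.Adj v w → u ≠ w → G.Adj u w

/-- A graph is chordal if it has no induced cycle of length greater than 3. -/
def IsChordal (G : FGraph) : Prop :=
  ∀ n : ℕ, 4 ≤ n → ¬ ∃ f : Fin n → ℕ, Function.Injective f ∧ (∀ i, f i ∈ G.verts) ∧
    ∀ i j : Fin n, G.Adj (f i) (f j) ↔ ((i : ℕ) + 1) % n = (j : ℕ) ∨ ((j : ℕ) + 1) % n = (i : ℕ)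

/-- A (general) perfect elimination scheme: an ordering of the vertices such that each
vertex is simplicial in the subgraph induced by it and the earlier vertices. -/
def IsPES (l : List ℕ) (G : FGraph) : Prop :=
  l.Nodup ∧ G.verts = {v | v ∈ l} ∧
  ∀ i : Fin l.length, IsSimplicial (G.induce {v | v ∈ l.take ((i : ℕ) + 1)}) (l.get i)

/-- `G` can be reduced to the empty graph by repeatedly deleting simplicial vertices. -/
inductive Reducible : FGraph → Prop
  | empty (G : FGraph) (h : G.verts = ∅) : Reducible G
  | delete (G : FGraph) (v : ℕ) (hv : IsSimplicial G v)
      (h : Reducible (G.deleteVerts {v})) : Reducible G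

/-- `G` is 3-connected: at least 4 vertices, and deleting any two vertices leaves it
connected. -/
def ThreeConnected (G : FGraph) : Prop :=
  4 ≤ G.verts.ncard ∧ ∀ S : Finset ℕ, S.card ≤ 2 → (G.deleteVerts ↑S).Connected

/-- `G` has a tree decomposition of width at most `k`. -/
def HasTreewidthLE (G : FGraph) (k : ℕ) : Prop :=
  ∃ (ι : Type) (T : SimpleGraph ι) (B : ι → Finset ℕ),
    T.Connected ∧ T.IsAcyclic ∧
    (∀ v ∈ G.verts, ∃ i, v ∈ B i) ∧
    (∀ u v, G.Adj u v → ∃ i, u ∈ B i ∧ v ∈ B i) ∧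
    (∀ v ∈ G.verts, (SimpleGraph.induce {i | v ∈ B i} T).Connected) ∧
    (∀ i, (B i).card ≤ k + 1)

/-- `G` is acyclic (a forest). -/
def AcyclicFG (G : FGraph) : Prop := G.coe.IsAcyclic

/-- `G` is a complete graph on its vertex set. -/
def CompleteFG (G : FGraph) : Prop := ∀ u ∈ G.verts, ∀ v ∈ G.verts, u ≠ v → G.Adj u v

/-- The path on the three vertices `0, 1, 2`. -/
def P3 : FGraph := addEdge (addEdge (cliqueGraph ∅) 0 1) 1 2
section PartA

/-- Build a 3-tree starting from the base triangle `s`. -/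
inductive BuildFrom (s : Finset ℕ) : FGraph → Prop
  | base : BuildFrom s (cliqueGraph s)
  | grow (G : FGraph) (hG : BuildFrom s G) (t : Finset ℕ) (ht : t.card = 3)
      (hclique : IsCliqueIn G t) (v : ℕ) (hv : v ∉ G.verts) :
      BuildFrom s (addVertex G v t)

lemma buildFrom_subset {s : Finset ℕ} {G : FGraph} (h : BuildFrom s G) : ↑s ⊆ G.verts := by
  induction h with
  | base => exact fun y hy => hy
  | grow G hG t ht hclique v hv ih => exact fun y hy => Set.mem_insert_of_mem _ (ih hy)

lemma buildFrom_isKTree {s : Finset ℕ} {G : FGraph} (hs : s.card = 3) (h : BuildFrom s G) :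
    IsKTree 3 G := by
  induction h with
  | base => exact IsKTree.base s hs
  | grow G hG t ht hclique v hv ih => exact IsKTree.grow G ih t ht hclique v hv

lemma addVertex_cliqueGraph {s : Finset ℕ} {v : ℕ} (hv : v ∉ s) :
    addVertex (cliqueGraph s) v s = cliqueGraph (insert v s) := by
  apply SimpleGraph.Subgraph.ext
  · show insert v (↑s : Set ℕ) = ↑(insert v s)
    simp
  · funext p q
    apply propext
    constructor
    · rintro (⟨h1, h2, h3⟩ | ⟨rfl, h2, h3, h4⟩ | ⟨rfl, h2, h3, h4⟩)
      · exact ⟨Finset.mem_insert_of_mem h1, Finset.mem_insert_of_mem h2, h3⟩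
      · exact ⟨Finset.mem_insert_self _ _, Finset.mem_insert_of_mem h3, fun e => h2 e.symm⟩
      · exact ⟨Finset.mem_insert_of_mem h3, Finset.mem_insert_self _ _, h2⟩
    · rintro ⟨h1, h2, h3⟩
      rcases Finset.mem_insert.1 h1 with hp | hp
      · rcases Finset.mem_insert.1 h2 with hq | hq
        · exact absurd (hp.trans hq.symm) h3
        · exact Or.inr (Or.inl ⟨hp, fun e => hv (e ▸ hq), hq, hq⟩)
      · rcases Finset.mem_insert.1 h2 with hq | hq
        · exact Or.inr (Or.inr ⟨hq, fun e => hv (e ▸ hp), hp, hp⟩)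
        · exact Or.inl ⟨hp, hq, h3⟩

lemma addVertex_comm {G : FGraph} {v w : ℕ} {s t : Finset ℕ}
    (hs : ↑s ⊆ G.verts) (ht : ↑t ⊆ G.verts) (hv : v ∉ G.verts) (hw : w ∉ G.verts)
    (hvw : v ≠ w) :
    addVertex (addVertex G w t) v s = addVertex (addVertex G v s) w t := by
  have hvt : v ∉ t := fun h => hv (ht h)
  have hws : w ∉ s := fun h => hw (hs h)
  apply SimpleGraph.Subgraph.ext
  · show insert v (insert w G.verts) = insert w (insert v G.verts)
    exact Set.insert_comm _ _ _
  · funext p q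
    apply propext
    constructor
    · rintro ((h | ⟨rfl, h2, h3, h4⟩ | ⟨rfl, h2, h3, h4⟩) | ⟨rfl, h2, h3, h4⟩ | ⟨rfl, h2, h3, h4⟩)
      · exact Or.inl (Or.inl h)
      · exact Or.inr (Or.inl ⟨rfl, h2, h3, Set.mem_insert_of_mem _ h4⟩)
      · exact Or.inr (Or.inr ⟨rfl, h2, h3, Set.mem_insert_of_mem _ h4⟩)
      · rcases Set.mem_insert_iff.1 h4 with rfl | h4
        · exact absurd h3 hws
        · exact Or.inl (Or.inr (Or.inl ⟨rfl, h2, h3, h4⟩))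
      · rcases Set.mem_insert_iff.1 h4 with rfl | h4
        · exact absurd h3 hws
        · exact Or.inl (Or.inr (Or.inr ⟨rfl, h2, h3, h4⟩))
    · rintro ((h | ⟨rfl, h2, h3, h4⟩ | ⟨rfl, h2, h3, h4⟩) | ⟨rfl, h2, h3, h4⟩ | ⟨rfl, h2, h3, h4⟩)
      · exact Or.inl (Or.inl h)
      · exact Or.inr (Or.inl ⟨rfl, h2, h3, Set.mem_insert_of_mem _ h4⟩)
      · exact Or.inr (Or.inr ⟨rfl, h2, h3, Set.mem_insert_of_mem _ h4⟩)
      · rcases Set.mem_insert_iff.1 h4 with rfl | h4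
        · exact absurd h3 hvt
        · exact Or.inl (Or.inr (Or.inl ⟨rfl, h2, h3, h4⟩))
      · rcases Set.mem_insert_iff.1 h4 with rfl | h4
        · exact absurd h3 hvt
        · exact Or.inl (Or.inr (Or.inr ⟨rfl, h2, h3, h4⟩))

lemma buildFrom_swap {s : Finset ℕ} {G : FGraph} (h : BuildFrom s G) :
    ∀ t : Finset ℕ, ∀ v : ℕ, v ∉ G.verts → s.card = 3 → t.card = 3 → t ⊆ insert v s →
      v ∈ t → BuildFrom t (addVertex G v s) := by
  induction h with
  | base =>
    intro t v hv hs ht hts hvt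
    have hvs : v ∉ s := hv
    -- find the missing vertex u
    have hcard : (insert v s).card = 4 := by rw [Finset.card_insert_of_notMem hvs, hs]
    have hsd : ((insert v s) \ t).card = 1 := by
      rw [Finset.card_sdiff_of_subset hts, hcard, ht]
    obtain ⟨u, hu⟩ := Finset.card_eq_one.1 hsd
    have hut : u ∉ t := by
      have : u ∈ insert v s \ t := hu ▸ Finset.mem_singleton_self u
      exact (Finset.mem_sdiff.1 this).2
    have hins : insert u t = insert v s := by
      apply Finset.eq_of_subset_of_card_le
      · intro y hy
        rcases Finset.mem_insert.1 hy with rfl | hy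
        · have : y ∈ insert v s \ t := hu ▸ Finset.mem_singleton_self y
          exact (Finset.mem_sdiff.1 this).1
        · exact hts hy
      · rw [hcard, Finset.card_insert_of_notMem hut, ht]
    have heq : addVertex (cliqueGraph s) v s = addVertex (cliqueGraph t) u t := by
      rw [addVertex_cliqueGraph hvs, addVertex_cliqueGraph hut, hins]
    rw [heq]
    exact BuildFrom.grow (cliqueGraph t) BuildFrom.base t ht
      ⟨fun y hy => hy, fun p hp q hq hpq => ⟨hp, hq, hpq⟩⟩ u hut
  | grow G hG tt htt hclique w hw ih =>
    intro t v hv hs ht hts hvt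
    have hvG : v ∉ G.verts := fun h => hv (Set.mem_insert_of_mem _ h)
    have hvw : v ≠ w := fun e => hv (e ▸ Set.mem_insert _ _)
    have hsG : ↑s ⊆ G.verts := buildFrom_subset hG
    have heq : addVertex (addVertex G w tt) v s = addVertex (addVertex G v s) w tt :=
      addVertex_comm hsG hclique.1 hvG hw hvw
    rw [heq]
    refine BuildFrom.grow _ (ih t v hvG hs ht hts hvt) tt htt ?_ w ?_
    · exact ⟨fun y hy => Set.mem_insert_of_mem _ (hclique.1 hy),
        fun p hp q hq hpq => Or.inl (hclique.2 p hp q hq hpq)⟩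
    · intro hmem
      rcases Set.mem_insert_iff.1 hmem with rfl | hmem
      · exact hvw rfl
      · exact hw hmem

lemma buildFrom_of_clique {G : FGraph} (h : IsKTree 3 G) :
    ∀ t : Finset ℕ, t.card = 3 → IsCliqueIn G t → BuildFrom t G := by
  induction h with
  | base s hs =>
    intro t ht hclique
    have hts : t ⊆ s := Finset.coe_subset.1 hclique.1
    have : t = s := Finset.eq_of_subset_of_card_le hts (by omega)
    rw [this]; exact BuildFrom.base
  | grow G hG s hs hclique v hv ih =>
    intro t ht htclique
    by_cases hvt : v ∈ t
    · -- t contains v; all other members of t lie in s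
      have hts : t ⊆ insert v s := by
        intro p hp
        by_cases hpv : p = v
        · exact hpv ▸ Finset.mem_insert_self _ _
        · have hadj := htclique.2 v hvt p hp (fun e => hpv e.symm)
          rcases hadj with h | ⟨h1, h2, h3, h4⟩ | ⟨h1, h2, h3, h4⟩
          · exact absurd (G.edge_vert h) hv
          · exact Finset.mem_insert_of_mem h3
          · exact absurd h1 hpv
      exact buildFrom_swap (ih s hs hclique) t v hv hs ht hts hvt
    · -- t is a clique of G
      have htG : IsCliqueIn G t := by
        constructor
        · intro p hp
          have := htclique.1 hp
          rcases Set.mem_insert_iff.1 this with rfl | h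
          · exact absurd (by exact_mod_cast hp) hvt
          · exact h
        · intro p hp q hq hpq
          have hadj := htclique.2 p hp q hq hpq
          rcases hadj with h | ⟨h1, h2, h3, h4⟩ | ⟨h1, h2, h3, h4⟩
          · exact h
          · exact absurd (h1 ▸ hp) hvt
          · exact absurd (h1 ▸ hq) hvt
      exact BuildFrom.grow G (ih t ht htG) s hs hclique v hv

lemma sup_cliqueGraph_eq {F : FGraph} {s : Finset ℕ} (hclique : IsCliqueIn F s) :
    F ⊔ cliqueGraph s = F := by
  apply SimpleGraph.Subgraph.ext
  · show F.verts ∪ ↑s = F.verts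
    exact Set.union_eq_self_of_subset_right hclique.1
  · funext p q
    apply propext
    rw [SimpleGraph.Subgraph.sup_adj]
    constructor
    · rintro (h | ⟨h1, h2, h3⟩)
      · exact h
      · exact hclique.2 p h1 q h2 h3
    · exact Or.inl

lemma sup_addVertex_eq {F G : FGraph} {v : ℕ} {t : Finset ℕ} (htG : ↑t ⊆ G.verts) :
    F ⊔ addVertex G v t = addVertex (F ⊔ G) v t := by
  apply SimpleGraph.Subgraph.ext
  · show F.verts ∪ insert v G.verts = insert v (F.verts ∪ G.verts)
    rw [Set.union_comm F.verts, Set.insert_union, Set.union_comm G.verts]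
  · funext p q
    apply propext
    rw [SimpleGraph.Subgraph.sup_adj]
    constructor
    · rintro (h | (h | ⟨rfl, h2, h3, h4⟩ | ⟨rfl, h2, h3, h4⟩))
      · exact Or.inl (SimpleGraph.Subgraph.sup_adj.2 (Or.inl h))
      · exact Or.inl (SimpleGraph.Subgraph.sup_adj.2 (Or.inr h))
      · exact Or.inr (Or.inl ⟨rfl, h2, h3, Set.mem_union_right _ h4⟩)
      · exact Or.inr (Or.inr ⟨rfl, h2, h3, Set.mem_union_right _ h4⟩)
    · rintro (h | ⟨rfl, h2, h3, h4⟩ | ⟨rfl, h2, h3, h4⟩)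
      · rcases SimpleGraph.Subgraph.sup_adj.1 h with h | h
        · exact Or.inl h
        · exact Or.inr (Or.inl h)
      · exact Or.inr (Or.inr (Or.inl ⟨rfl, h2, h3, htG h3⟩))
      · exact Or.inr (Or.inr (Or.inr ⟨rfl, h2, h3, htG h3⟩))

lemma transplant {s : Finset ℕ} {G2' : FGraph} (hb : BuildFrom s G2') :
    ∀ F : FGraph, IsKTree 3 F → IsCliqueIn F s → s.card = 3 →
      F.verts ∩ G2'.verts = ↑s → IsKTree 3 (F ⊔ G2') := by
  induction hb with
  | base =>
    intro F hF hclique hs hinter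
    rw [sup_cliqueGraph_eq hclique]; exact hF
  | grow G hG t ht hclique v hv ih =>
    intro F hF hFs hs hinter
    have hsG : ↑s ⊆ G.verts := buildFrom_subset hG
    have hinter' : F.verts ∩ G.verts = ↑s := by
      apply Set.Subset.antisymm
      · intro y hy
        have : y ∈ F.verts ∩ (addVertex G v t).verts :=
          ⟨hy.1, Set.mem_insert_of_mem _ hy.2⟩
        exact hinter ▸ this
      · intro y hy
        exact ⟨hFs.1 hy, hsG hy⟩
    have hvF : v ∉ F.verts := by
      intro hvf
      have : v ∈ F.verts ∩ (addVertex G v t).verts := ⟨hvf, Set.mem_insert _ _⟩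
      rw [hinter] at this
      exact hv (hsG this)
    have heq : F ⊔ addVertex G v t = addVertex (F ⊔ G) v t := sup_addVertex_eq hclique.1
    rw [heq]
    refine IsKTree.grow _ (ih F hF hFs hs hinter') t ht ?_ v ?_
    · exact ⟨fun y hy => Set.mem_union_right _ (hclique.1 hy),
        fun p hp q hq hpq => SimpleGraph.Subgraph.sup_adj.2 (Or.inr (hclique.2 p hp q hq hpq))⟩
    · rintro (h | h)
      · exact hvF h
      · exact hv h

end PartA
section PartA2

lemma IsCliqueIn_triangle {G : FGraph} {p q r : ℕ} (hpq : G.Adj p q) (hqr : G.Adj q r)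
    (hpr : G.Adj p r) : IsCliqueIn G {p, q, r} := by
  constructor
  · intro y hy
    simp only [Finset.coe_insert, Set.mem_insert_iff, Finset.coe_singleton,
      Set.mem_singleton_iff] at hy
    rcases hy with rfl | rfl | rfl
    · exact G.edge_vert hpq
    · exact G.edge_vert (G.adj_symm hpq)
    · exact G.edge_vert (G.adj_symm hpr)
  · intro u hu v hv huv
    simp only [Finset.mem_insert, Finset.mem_singleton] at hu hv
    rcases hu with rfl | rfl | rfl <;> rcases hv with rfl | rfl | rfl
    · exact absurd rfl huv
    · exact hpq
    · exact hpr
    · exact G.adj_symm hpq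
    · exact absurd rfl huv
    · exact hqr
    · exact G.adj_symm hpr
    · exact G.adj_symm hqr
    · exact absurd rfl huv

lemma partA_main (G1 G2 : FGraph) (h1 : IsKTree 3 G1) (h2 : IsKTree 3 G2) (a b c x : ℕ)
    (hinter : G1.verts ∩ G2.verts = {a, b}) (hab : a ≠ b)
    (hab1 : G1.Adj a b) (hab2 : G2.Adj a b)
    (hbc : G1.Adj b c) (hac : G1.Adj a c) (hbx : G2.Adj b x) (hax : G2.Adj a x)
    (hc : c ∉ G2.verts) (hx : x ∉ G1.verts) :
    IsKTree 3 (addEdge (G1 ⊔ G2) x c) := by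
  have haV1 : a ∈ G1.verts := G1.edge_vert hab1
  have hbV1 : b ∈ G1.verts := G1.edge_vert (G1.adj_symm hab1)
  have hcV1 : c ∈ G1.verts := G1.edge_vert (G1.adj_symm hbc)
  have haV2 : a ∈ G2.verts := G2.edge_vert hab2
  have hbV2 : b ∈ G2.verts := G2.edge_vert (G2.adj_symm hab2)
  have hxV2 : x ∈ G2.verts := G2.edge_vert (G2.adj_symm hbx)
  have hca : c ≠ a := fun e => hc (e ▸ haV2)
  have hcb : c ≠ b := fun e => hc (e ▸ hbV2)
  have hxa : x ≠ a := fun e => hx (e ▸ haV1)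
  have hxb : x ≠ b := fun e => hx (e ▸ hbV1)
  have hxc : x ≠ c := fun e => hx (e ▸ hcV1)
  have hcard1 : ({a, b, c} : Finset ℕ).card = 3 := by
    rw [Finset.card_insert_of_notMem (by simp [hab, hca.symm]),
      Finset.card_insert_of_notMem (by simp [hcb.symm])]
    rfl
  have hcard2 : ({a, b, x} : Finset ℕ).card = 3 := by
    rw [Finset.card_insert_of_notMem (by simp [hab, hxa.symm]),
      Finset.card_insert_of_notMem (by simp [hxb.symm])]
    rfl
  set F : FGraph := addVertex G1 x {a, b, c} with hFdef
  have hF : IsKTree 3 F :=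
    IsKTree.grow G1 h1 {a, b, c} hcard1 (IsCliqueIn_triangle hab1 hbc hac) x hx
  have hclF : IsCliqueIn F {a, b, x} := by
    constructor
    · intro y hy
      simp only [Finset.coe_insert, Set.mem_insert_iff, Finset.coe_singleton,
        Set.mem_singleton_iff] at hy
      rcases hy with rfl | rfl | rfl
      · exact Set.mem_insert_of_mem _ haV1
      · exact Set.mem_insert_of_mem _ hbV1
      · exact Set.mem_insert _ _
    · intro u hu v hv huv
      simp only [Finset.mem_insert, Finset.mem_singleton] at hu hv
      rcases hu with rfl | rfl | rfl <;> rcases hv with rfl | rfl | rfl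
      · exact absurd rfl huv
      · exact Or.inl hab1
      · exact Or.inr (Or.inr ⟨rfl, fun e => hxa e.symm, by simp, haV1⟩)
      · exact Or.inl (G1.adj_symm hab1)
      · exact absurd rfl huv
      · exact Or.inr (Or.inr ⟨rfl, fun e => hxb e.symm, by simp, hbV1⟩)
      · exact Or.inr (Or.inl ⟨rfl, hxa.symm, by simp, haV1⟩)
      · exact Or.inr (Or.inl ⟨rfl, hxb.symm, by simp, hbV1⟩)
      · exact absurd rfl huv
  have hintF : F.verts ∩ G2.verts = ↑({a, b, x} : Finset ℕ) := by
    ext y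
    simp only [hFdef, addVertex, Set.mem_inter_iff, Set.mem_insert_iff, Finset.coe_insert,
      Set.mem_insert_iff, Finset.coe_singleton, Set.mem_singleton_iff]
    constructor
    · rintro ⟨rfl | hy, hy2⟩
      · exact Or.inr (Or.inr rfl)
      · have : y ∈ G1.verts ∩ G2.verts := ⟨hy, hy2⟩
        rw [hinter] at this
        rcases this with rfl | h
        · exact Or.inl rfl
        · exact Or.inr (Or.inl h)
    · rintro (rfl | rfl | rfl)
      · exact ⟨Or.inr haV1, haV2⟩
      · exact ⟨Or.inr hbV1, hbV2⟩
      · exact ⟨Or.inl rfl, hxV2⟩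
  have hb2 : BuildFrom {a, b, x} G2 :=
    buildFrom_of_clique h2 _ hcard2 (IsCliqueIn_triangle hab2 hbx hax)
  have hKT : IsKTree 3 (F ⊔ G2) := transplant hb2 F hF hclF hcard2 hintF
  have heq : addEdge (G1 ⊔ G2) x c = F ⊔ G2 := by
    apply SimpleGraph.Subgraph.ext
    · show insert x (insert c (G1.verts ∪ G2.verts)) = (insert x G1.verts) ∪ G2.verts
      rw [Set.insert_eq_of_mem (Set.mem_union_left _ hcV1), Set.insert_union]
    · funext p q
      apply propext
      constructor
      · rintro (h | ⟨rfl, rfl, h3⟩ | ⟨rfl, rfl, h3⟩)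
        · rcases SimpleGraph.Subgraph.sup_adj.1 h with h | h
          · exact Or.inl (Or.inl h)
          · exact Or.inr h
        · exact Or.inl (Or.inr (Or.inl ⟨rfl, fun e => hxc e.symm, by simp, hcV1⟩))
        · exact Or.inl (Or.inr (Or.inr ⟨rfl, fun e => hxc e.symm, by simp, hcV1⟩))
      · rintro ((h | ⟨rfl, h2', h3, h4⟩ | ⟨rfl, h2', h3, h4⟩) | h)
        · exact Or.inl (SimpleGraph.Subgraph.sup_adj.2 (Or.inl h))
        · -- p = x, q ∈ {a,b,c} ∩ G1.verts
          simp only [Finset.mem_insert, Finset.mem_singleton] at h3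
          rcases h3 with rfl | rfl | rfl
          · exact Or.inl (SimpleGraph.Subgraph.sup_adj.2 (Or.inr (G2.adj_symm hax)))
          · exact Or.inl (SimpleGraph.Subgraph.sup_adj.2 (Or.inr (G2.adj_symm hbx)))
          · exact Or.inr (Or.inl ⟨rfl, rfl, hxc⟩)
        · simp only [Finset.mem_insert, Finset.mem_singleton] at h3
          rcases h3 with rfl | rfl | rfl
          · exact Or.inl (SimpleGraph.Subgraph.sup_adj.2 (Or.inr hax))
          · exact Or.inl (SimpleGraph.Subgraph.sup_adj.2 (Or.inr hbx))
          · exact Or.inr (Or.inr ⟨rfl, rfl, hxc⟩)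
        · exact Or.inl (SimpleGraph.Subgraph.sup_adj.2 (Or.inr h))
  rw [heq]
  exact hKT

end PartA2
section PartB

noncomputable def side1 (G1 : FGraph) (x : ℕ) (D : Finset ℕ) : Finset ℕ :=
  @Finset.filter ℕ (fun v => v ∈ G1.verts ∪ {x}) (Classical.decPred _) D

noncomputable def sideV1 (G1 : FGraph) (D : Finset ℕ) : Finset ℕ :=
  @Finset.filter ℕ (fun v => v ∈ G1.verts) (Classical.decPred _) D

lemma mem_side1 {G1 : FGraph} {x : ℕ} {D : Finset ℕ} {v : ℕ} :
    v ∈ side1 G1 x D ↔ v ∈ D ∧ v ∈ G1.verts ∪ {x} :=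
  @Finset.mem_filter ℕ (fun v => v ∈ G1.verts ∪ {x}) (Classical.decPred _) D v

lemma mem_sideV1 {G1 : FGraph} {D : Finset ℕ} {v : ℕ} :
    v ∈ sideV1 G1 D ↔ v ∈ D ∧ v ∈ G1.verts :=
  @Finset.mem_filter ℕ (fun v => v ∈ G1.verts) (Classical.decPred _) D v

def MinModel (K Γ : FGraph) (β : ℕ → Finset ℕ) : Prop :=
  (∀ u ∈ K.verts, (β u).Nonempty ∧ ↑(β u) ⊆ Γ.verts ∧ (Γ.induce ↑(β u)).coe.Connected) ∧
  (∀ u ∈ K.verts, ∀ v ∈ K.verts, u ≠ v → Disjoint (β u) (β v)) ∧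
  (∀ u v, K.Adj u v → ∃ p ∈ β u, ∃ q ∈ β v, Γ.Adj p q)

lemma isMinor_iff {K Γ : FGraph} : IsMinor K Γ ↔ ∃ β, MinModel K Γ β := Iff.rfl

structure Setup (G1 G2 : FGraph) (a b c x : ℕ) : Prop where
  hinter : G1.verts ∩ G2.verts = {a, b}
  hab1 : G1.Adj a b
  hbc : G1.Adj b c
  hac : G1.Adj a c
  hab2 : G2.Adj a b
  hbx : G2.Adj b x
  hax : G2.Adj a x
  hc : c ∉ G2.verts
  hx : x ∉ G1.verts

namespace Setup

variable {G1 G2 : FGraph} {a b c x : ℕ}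

lemma symm (st : Setup G1 G2 a b c x) : Setup G2 G1 a b x c :=
  ⟨by rw [Set.inter_comm]; exact st.hinter, st.hab2, st.hbx, st.hax,
    st.hab1, st.hbc, st.hac, st.hx, st.hc⟩

lemma haV1 (st : Setup G1 G2 a b c x) : a ∈ G1.verts := G1.edge_vert st.hab1
lemma hbV1 (st : Setup G1 G2 a b c x) : b ∈ G1.verts := G1.edge_vert (G1.adj_symm st.hab1)
lemma hcV1 (st : Setup G1 G2 a b c x) : c ∈ G1.verts := G1.edge_vert (G1.adj_symm st.hbc)
lemma haV2 (st : Setup G1 G2 a b c x) : a ∈ G2.verts := G2.edge_vert st.hab2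
lemma hbV2 (st : Setup G1 G2 a b c x) : b ∈ G2.verts := G2.edge_vert (G2.adj_symm st.hab2)
lemma hxV2 (st : Setup G1 G2 a b c x) : x ∈ G2.verts := G2.edge_vert (G2.adj_symm st.hbx)
lemma hca (st : Setup G1 G2 a b c x) : c ≠ a := fun e => st.hc (e ▸ st.haV2)
lemma hcb (st : Setup G1 G2 a b c x) : c ≠ b := fun e => st.hc (e ▸ st.hbV2)
lemma hxa (st : Setup G1 G2 a b c x) : x ≠ a := fun e => st.hx (e ▸ st.haV1)
lemma hxb (st : Setup G1 G2 a b c x) : x ≠ b := fun e => st.hx (e ▸ st.hbV1)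
lemma hxc (st : Setup G1 G2 a b c x) : x ≠ c := fun e => st.hx (e ▸ st.hcV1)
lemma hab (st : Setup G1 G2 a b c x) : a ≠ b := (SimpleGraph.top_adj _ _).1 (G1.adj_sub st.hab1)

lemma mem_ab (st : Setup G1 G2 a b c x) {p : ℕ} (h1 : p ∈ G1.verts) (h2 : p ∈ G2.verts) : p = a ∨ p = b := by
  have : p ∈ G1.verts ∩ G2.verts := ⟨h1, h2⟩
  rw [st.hinter] at this
  exact this

lemma Hverts (st : Setup G1 G2 a b c x) : (addEdge (G1 ⊔ G2) x c).verts = G1.verts ∪ G2.verts := by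
  show insert x (insert c (G1.verts ∪ G2.verts)) = G1.verts ∪ G2.verts
  rw [Set.insert_eq_of_mem (Set.mem_union_left _ st.hcV1),
    Set.insert_eq_of_mem (Set.mem_union_right _ st.hxV2)]

lemma hadj_iff (st : Setup G1 G2 a b c x) {p q : ℕ} : (addEdge (G1 ⊔ G2) x c).Adj p q ↔
    G1.Adj p q ∨ G2.Adj p q ∨ (p = x ∧ q = c) ∨ (p = c ∧ q = x) := by
  constructor
  · rintro (h | ⟨h1, h2, h3⟩ | ⟨h1, h2, h3⟩)
    · rcases SimpleGraph.Subgraph.sup_adj.1 h with h | h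
      · exact Or.inl h
      · exact Or.inr (Or.inl h)
    · exact Or.inr (Or.inr (Or.inl ⟨h1, h2⟩))
    · exact Or.inr (Or.inr (Or.inr ⟨h1, h2⟩))
  · rintro (h | h | ⟨rfl, rfl⟩ | ⟨rfl, rfl⟩)
    · exact Or.inl (SimpleGraph.Subgraph.sup_adj.2 (Or.inl h))
    · exact Or.inl (SimpleGraph.Subgraph.sup_adj.2 (Or.inr h))
    · exact Or.inr (Or.inl ⟨rfl, rfl, st.hxc⟩)
    · exact Or.inr (Or.inr ⟨rfl, rfl, st.hxc⟩)

lemma Hsym (st : Setup G1 G2 a b c x) : addEdge (G1 ⊔ G2) x c = addEdge (G2 ⊔ G1) c x := by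
  apply SimpleGraph.Subgraph.ext
  · rw [st.Hverts, st.symm.Hverts, Set.union_comm]
  · funext p q
    apply propext
    rw [st.hadj_iff, st.symm.hadj_iff]
    tauto

/-- From a vertex of `G1` other than `a,b,c`, all edges of `H` are edges of `G1`. -/
lemma adjA (st : Setup G1 G2 a b c x) {p q : ℕ} (hp1 : p ∈ G1.verts) (hpa : p ≠ a) (hpb : p ≠ b) (hpc : p ≠ c)
    (h : (addEdge (G1 ⊔ G2) x c).Adj p q) : G1.Adj p q := by
  rcases st.hadj_iff.1 h with h | h | ⟨rfl, rfl⟩ | ⟨rfl, rfl⟩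
  · exact h
  · rcases st.mem_ab hp1 (G2.edge_vert h) with rfl | rfl
    · exact absurd rfl hpa
    · exact absurd rfl hpb
  · exact absurd hp1 st.hx
  · exact absurd rfl hpc

lemma W1verts (st : Setup G1 G2 a b c x) : (addVertex G1 x {a, b, c}).verts = G1.verts ∪ {x} := by
  show insert x G1.verts = _
  rw [Set.union_singleton]

lemma W1adj_xs (st : Setup G1 G2 a b c x) {q : ℕ} (hq : q = a ∨ q = b ∨ q = c) :
    (addVertex G1 x {a, b, c}).Adj x q := by
  have hqV1 : q ∈ G1.verts := by
    rcases hq with rfl | rfl | rfl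
    · exact st.haV1
    · exact st.hbV1
    · exact st.hcV1
  have hqx : q ≠ x := fun e => st.hx (e ▸ hqV1)
  refine Or.inr (Or.inl ⟨rfl, hqx, ?_, hqV1⟩)
  simp only [Finset.mem_insert, Finset.mem_singleton]
  exact hq

/-- `{a,b,c,x}` is a clique in `W1`. -/
lemma Sadj (st : Setup G1 G2 a b c x) {p q : ℕ} (hp : p = a ∨ p = b ∨ p = c ∨ p = x)
    (hq : q = a ∨ q = b ∨ q = c ∨ q = x) (hpq : p ≠ q) :
    (addVertex G1 x {a, b, c}).Adj p q := by
  rcases hp with h1 | h1 | h1 | h1 <;> rcases hq with h2 | h2 | h2 | h2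
  · exact absurd (h1.trans h2.symm) hpq
  · rw [h1, h2]; exact Or.inl st.hab1
  · rw [h1, h2]; exact Or.inl st.hac
  · rw [h1, h2]; exact (addVertex G1 x {a,b,c}).adj_symm (st.W1adj_xs (Or.inl rfl))
  · rw [h1, h2]; exact Or.inl (G1.adj_symm st.hab1)
  · exact absurd (h1.trans h2.symm) hpq
  · rw [h1, h2]; exact Or.inl st.hbc
  · rw [h1, h2]; exact (addVertex G1 x {a,b,c}).adj_symm (st.W1adj_xs (Or.inr (Or.inl rfl)))
  · rw [h1, h2]; exact Or.inl (G1.adj_symm st.hac)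
  · rw [h1, h2]; exact Or.inl (G1.adj_symm st.hbc)
  · exact absurd (h1.trans h2.symm) hpq
  · rw [h1, h2]; exact (addVertex G1 x {a,b,c}).adj_symm (st.W1adj_xs (Or.inr (Or.inr rfl)))
  · rw [h1, h2]; exact st.W1adj_xs (Or.inl rfl)
  · rw [h1, h2]; exact st.W1adj_xs (Or.inr (Or.inl rfl))
  · rw [h1, h2]; exact st.W1adj_xs (Or.inr (Or.inr rfl))
  · exact absurd (h1.trans h2.symm) hpq

/-- Edges of `H` between vertices of `G1.verts ∪ {x}` are edges of `W1`, and conversely. -/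
lemma agree (st : Setup G1 G2 a b c x) {p q : ℕ} (hp : p ∈ G1.verts ∪ {x}) (hq : q ∈ G1.verts ∪ {x}) :
    (addEdge (G1 ⊔ G2) x c).Adj p q ↔ (addVertex G1 x {a, b, c}).Adj p q := by
  constructor
  · intro h
    have hne : p ≠ q := (SimpleGraph.top_adj _ _).1 ((addEdge (G1 ⊔ G2) x c).adj_sub h)
    rcases st.hadj_iff.1 h with h | h | ⟨he1, he2⟩ | ⟨he1, he2⟩
    · exact Or.inl h
    · -- G2 edge within G1.verts ∪ {x}: both endpoints in {a,b,x}
      have hp' : p = a ∨ p = b ∨ p = x := by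
        rcases hp with hp | hp
        · rcases st.mem_ab hp (G2.edge_vert h) with h' | h'
          · exact Or.inl h'
          · exact Or.inr (Or.inl h')
        · exact Or.inr (Or.inr hp)
      have hq' : q = a ∨ q = b ∨ q = x := by
        rcases hq with hq | hq
        · rcases st.mem_ab hq (G2.edge_vert (G2.adj_symm h)) with h' | h'
          · exact Or.inl h'
          · exact Or.inr (Or.inl h')
        · exact Or.inr (Or.inr hq)
      apply st.Sadj _ _ hne
      · rcases hp' with h' | h' | h'
        · exact Or.inl h'
        · exact Or.inr (Or.inl h')
        · exact Or.inr (Or.inr (Or.inr h'))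
      · rcases hq' with h' | h' | h'
        · exact Or.inl h'
        · exact Or.inr (Or.inl h')
        · exact Or.inr (Or.inr (Or.inr h'))
    · rw [he1, he2]; exact st.W1adj_xs (Or.inr (Or.inr rfl))
    · rw [he1, he2]; exact (addVertex G1 x {a,b,c}).adj_symm (st.W1adj_xs (Or.inr (Or.inr rfl)))
  · rintro (h | ⟨rfl, h2, h3, h4⟩ | ⟨rfl, h2, h3, h4⟩)
    · exact st.hadj_iff.2 (Or.inl h)
    · simp only [Finset.mem_insert, Finset.mem_singleton] at h3
      rcases h3 with rfl | rfl | rfl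
      · exact st.hadj_iff.2 (Or.inr (Or.inl (G2.adj_symm st.hax)))
      · exact st.hadj_iff.2 (Or.inr (Or.inl (G2.adj_symm st.hbx)))
      · exact st.hadj_iff.2 (Or.inr (Or.inr (Or.inl ⟨rfl, rfl⟩)))
    · simp only [Finset.mem_insert, Finset.mem_singleton] at h3
      rcases h3 with rfl | rfl | rfl
      · exact st.hadj_iff.2 (Or.inr (Or.inl st.hax))
      · exact st.hadj_iff.2 (Or.inr (Or.inl st.hbx))
      · exact st.hadj_iff.2 (Or.inr (Or.inr (Or.inr ⟨rfl, rfl⟩)))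

lemma induce_eq_W1 (st : Setup G1 G2 a b c x) {D : Set ℕ} (hD : D ⊆ G1.verts ∪ {x}) :
    (addEdge (G1 ⊔ G2) x c).induce D = (addVertex G1 x {a, b, c}).induce D := by
  apply SimpleGraph.Subgraph.ext
  · rfl
  · funext p q
    apply propext
    rw [SimpleGraph.Subgraph.induce_adj, SimpleGraph.Subgraph.induce_adj]
    constructor
    · rintro ⟨h1, h2, h3⟩
      exact ⟨h1, h2, (st.agree (hD h1) (hD h2)).1 h3⟩
    · rintro ⟨h1, h2, h3⟩
      exact ⟨h1, h2, (st.agree (hD h1) (hD h2)).2 h3⟩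

end Setup

lemma singleton_conn (Γ : FGraph) (v : ℕ) :
    (Γ.induce ↑({v} : Finset ℕ)).coe.Connected := by
  rw [SimpleGraph.connected_iff]
  constructor
  · intro p q
    have hp := p.2
    have hq := q.2
    simp only [SimpleGraph.Subgraph.induce_verts, Finset.coe_singleton,
      Set.mem_singleton_iff] at hp hq
    have : p = q := Subtype.ext (hp.trans hq.symm)
    rw [this]
  · exact ⟨⟨v, by simp⟩⟩

lemma walk_inv {Γ : FGraph} {D : Set ℕ} {P : ℕ → Prop}
    (hstep : ∀ p q, p ∈ D → q ∈ D → P p → Γ.Adj p q → P q)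
    {u v : ↥((Γ.induce D).verts)} (w : (Γ.induce D).coe.Walk u v) (hu : P ↑u) : P ↑v := by
  induction w with
  | nil => exact hu
  | @cons p r v h w ih =>
    have h' : (Γ.induce D).Adj ↑p ↑r := h
    rw [SimpleGraph.Subgraph.induce_adj] at h'
    exact ih (hstep ↑p ↑r h'.1 h'.2.1 hu h'.2.2)
namespace Setup

variable {G1 G2 : FGraph} {a b c x : ℕ}

lemma confine1 (st : Setup G1 G2 a b c x) {D : Finset ℕ}
    (hconn : ((addEdge (G1 ⊔ G2) x c).induce ↑D).coe.Connected)
    (haD : a ∉ D) (hbD : b ∉ D) (hxD : x ∉ D)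
    {p : ℕ} (hpD : p ∈ D) (hpV : p ∈ G1.verts) :
    ∀ q ∈ D, q ∈ G1.verts := by
  intro q hq
  obtain ⟨w⟩ := hconn.preconnected ⟨p, Finset.mem_coe.2 hpD⟩ ⟨q, Finset.mem_coe.2 hq⟩
  refine walk_inv (P := fun r => r ∈ G1.verts) ?_ w hpV
  intro p' q' hp' hq' hP hadj
  have hp'D : p' ∈ D := Finset.mem_coe.1 hp'
  have hq'D : q' ∈ D := Finset.mem_coe.1 hq'
  rcases st.hadj_iff.1 hadj with h | h | ⟨he1, he2⟩ | ⟨he1, he2⟩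
  · exact G1.edge_vert (G1.adj_symm h)
  · rcases st.mem_ab hP (G2.edge_vert h) with h' | h'
    · exact absurd (h' ▸ hp'D) haD
    · exact absurd (h' ▸ hp'D) hbD
  · exact absurd (he1 ▸ hP) st.hx
  · exact absurd (he2 ▸ hq'D) hxD

lemma confine2 (st : Setup G1 G2 a b c x) {D : Finset ℕ}
    (hconn : ((addEdge (G1 ⊔ G2) x c).induce ↑D).coe.Connected)
    (haD : a ∉ D) (hbD : b ∉ D) (hcD : c ∉ D)
    {p : ℕ} (hpD : p ∈ D) (hpV : p ∈ G2.verts) :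
    ∀ q ∈ D, q ∈ G2.verts := by
  have hconn' : ((addEdge (G2 ⊔ G1) c x).induce ↑D).coe.Connected := st.Hsym ▸ hconn
  exact st.symm.confine1 hconn' haD hbD hcD hpD hpV

lemma reach1 (st : Setup G1 G2 a b c x) {D : Finset ℕ} :
    ∀ (u v : ↥(((addEdge (G1 ⊔ G2) x c).induce (↑D : Set ℕ)).verts))
      (w : ((addEdge (G1 ⊔ G2) x c).induce (↑D : Set ℕ)).coe.Walk u v),
      ((v : ℕ) = a ∨ (v : ℕ) = b ∨ (v : ℕ) = c ∨ (v : ℕ) = x) →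
      ∀ (pp : ↥(((addVertex G1 x {a,b,c}).induce (↑(side1 G1 x D) : Set ℕ)).verts)),
        (pp : ℕ) = (u : ℕ) →
      ∃ t : ↥(((addVertex G1 x {a,b,c}).induce (↑(side1 G1 x D) : Set ℕ)).verts),
        ((t : ℕ) = a ∨ (t : ℕ) = b ∨ (t : ℕ) = c ∨ (t : ℕ) = x) ∧
        ((addVertex G1 x {a,b,c}).induce (↑(side1 G1 x D) : Set ℕ)).coe.Reachable pp t := by
  intro u v w
  induction w with
  | nil =>
    intro hv pp hpp
    exact ⟨pp, by rw [hpp]; exact hv, SimpleGraph.Reachable.refl pp⟩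
  | @cons u r v h w ih =>
    intro hv pp hpp
    by_cases hS : (u : ℕ) = a ∨ (u : ℕ) = b ∨ (u : ℕ) = c ∨ (u : ℕ) = x
    · exact ⟨pp, by rw [hpp]; exact hS, SimpleGraph.Reachable.refl pp⟩
    · push_neg at hS
      obtain ⟨hua, hub, huc, hux⟩ := hS
      have hppm := mem_side1.1 (show ((pp : ℕ) ∈ side1 G1 x D) from pp.2)
      have hu1 : (u : ℕ) ∈ G1.verts := by
        rcases hppm.2 with h' | h'
        · rwa [hpp] at h'
        · rw [hpp] at h'
          exact absurd h' hux
      have h' : ((addEdge (G1 ⊔ G2) x c).induce (↑D : Set ℕ)).Adj ↑u ↑r := h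
      rw [SimpleGraph.Subgraph.induce_adj] at h'
      have hG1 : G1.Adj ↑u ↑r := st.adjA hu1 hua hub huc h'.2.2
      have hr1 : (r : ℕ) ∈ G1.verts := G1.edge_vert (G1.adj_symm hG1)
      have hrD : (r : ℕ) ∈ D := Finset.mem_coe.1 h'.2.1
      have hrmem : (r : ℕ) ∈ (↑(side1 G1 x D) : Set ℕ) :=
        Finset.mem_coe.2 (mem_side1.2 ⟨hrD, Or.inl hr1⟩)
      set rr : ↥(((addVertex G1 x {a,b,c}).induce (↑(side1 G1 x D) : Set ℕ)).verts) :=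
        ⟨(r : ℕ), hrmem⟩ with hrr
      have hadjW : ((addVertex G1 x {a,b,c}).induce (↑(side1 G1 x D) : Set ℕ)).coe.Adj pp rr := by
        show ((addVertex G1 x {a,b,c}).induce (↑(side1 G1 x D) : Set ℕ)).Adj ↑pp ↑rr
        rw [SimpleGraph.Subgraph.induce_adj]
        exact ⟨pp.2, hrmem, by rw [hpp]; exact Or.inl hG1⟩
      obtain ⟨t, ht, hreach⟩ := ih hv rr rfl
      exact ⟨t, ht, hadjW.reachable.trans hreach⟩

lemma conn_side1 (st : Setup G1 G2 a b c x) {D : Finset ℕ}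
    (hconn : ((addEdge (G1 ⊔ G2) x c).induce ↑D).coe.Connected)
    {s0 : ℕ} (hs0D : s0 ∈ D) (hs0S : s0 = a ∨ s0 = b ∨ s0 = c ∨ s0 = x) :
    ((addVertex G1 x {a,b,c}).induce (↑(side1 G1 x D) : Set ℕ)).coe.Connected := by
  have hs0V : s0 ∈ G1.verts ∪ {x} := by
    rcases hs0S with rfl | rfl | rfl | rfl
    · exact Or.inl st.haV1
    · exact Or.inl st.hbV1
    · exact Or.inl st.hcV1
    · exact Or.inr rfl
  have hs0side : s0 ∈ (↑(side1 G1 x D) : Set ℕ) :=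
    Finset.mem_coe.2 (mem_side1.2 ⟨hs0D, hs0V⟩)
  rw [SimpleGraph.connected_iff]
  constructor
  · intro pp qq
    have hppD : (pp : ℕ) ∈ (↑D : Set ℕ) :=
      Finset.mem_coe.2 (mem_side1.1 (Finset.mem_coe.1 pp.2)).1
    have hqqD : (qq : ℕ) ∈ (↑D : Set ℕ) :=
      Finset.mem_coe.2 (mem_side1.1 (Finset.mem_coe.1 qq.2)).1
    obtain ⟨w1⟩ := hconn.preconnected ⟨↑pp, hppD⟩ ⟨s0, Finset.mem_coe.2 hs0D⟩
    obtain ⟨w2⟩ := hconn.preconnected ⟨↑qq, hqqD⟩ ⟨s0, Finset.mem_coe.2 hs0D⟩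
    obtain ⟨t1, ht1, hr1⟩ := st.reach1 _ _ w1 hs0S pp rfl
    obtain ⟨t2, ht2, hr2⟩ := st.reach1 _ _ w2 hs0S qq rfl
    have hmid : ((addVertex G1 x {a,b,c}).induce (↑(side1 G1 x D) : Set ℕ)).coe.Reachable t1 t2 := by
      by_cases heq : (t1 : ℕ) = (t2 : ℕ)
      · rw [Subtype.ext heq]
      · refine SimpleGraph.Adj.reachable ?_
        show ((addVertex G1 x {a,b,c}).induce (↑(side1 G1 x D) : Set ℕ)).Adj ↑t1 ↑t2
        rw [SimpleGraph.Subgraph.induce_adj]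
        exact ⟨t1.2, t2.2, st.Sadj ht1 ht2 heq⟩
    exact hr1.trans (hmid.trans hr2.symm)
  · exact ⟨⟨s0, hs0side⟩⟩

lemma reach2 (st : Setup G1 G2 a b c x) {D : Finset ℕ} (haD : a ∉ D) (hbD : b ∉ D) :
    ∀ (u v : ↥(((addEdge (G1 ⊔ G2) x c).induce (↑D : Set ℕ)).verts))
      (w : ((addEdge (G1 ⊔ G2) x c).induce (↑D : Set ℕ)).coe.Walk u v),
      (v : ℕ) = c →
      ∀ (pp cc : ↥(((addVertex G1 x {a,b,c}).induce (↑(sideV1 G1 D) : Set ℕ)).verts)),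
        (pp : ℕ) = (u : ℕ) → (cc : ℕ) = c →
      ((addVertex G1 x {a,b,c}).induce (↑(sideV1 G1 D) : Set ℕ)).coe.Reachable pp cc := by
  intro u v w
  induction w with
  | nil =>
    intro hv pp cc hpp hcc
    rw [Subtype.ext (hpp.trans (hv.trans hcc.symm))]
  | @cons u r v h w ih =>
    intro hv pp cc hpp hcc
    by_cases huc : (u : ℕ) = c
    · rw [Subtype.ext (hpp.trans (huc.trans hcc.symm))]
    · have hppm := mem_sideV1.1 (show ((pp : ℕ) ∈ sideV1 G1 D) from pp.2)
      have hu1 : (u : ℕ) ∈ G1.verts := by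
        have := hppm.2
        rwa [hpp] at this
      have huD : (u : ℕ) ∈ D := by
        have := hppm.1
        rwa [hpp] at this
      have hua : (u : ℕ) ≠ a := fun e => haD (e ▸ huD)
      have hub : (u : ℕ) ≠ b := fun e => hbD (e ▸ huD)
      have h' : ((addEdge (G1 ⊔ G2) x c).induce (↑D : Set ℕ)).Adj ↑u ↑r := h
      rw [SimpleGraph.Subgraph.induce_adj] at h'
      have hG1 : G1.Adj ↑u ↑r := st.adjA hu1 hua hub huc h'.2.2
      have hr1 : (r : ℕ) ∈ G1.verts := G1.edge_vert (G1.adj_symm hG1)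
      have hrD : (r : ℕ) ∈ D := Finset.mem_coe.1 h'.2.1
      have hrmem : (r : ℕ) ∈ (↑(sideV1 G1 D) : Set ℕ) :=
        Finset.mem_coe.2 (mem_sideV1.2 ⟨hrD, hr1⟩)
      have hadjW : ((addVertex G1 x {a,b,c}).induce (↑(sideV1 G1 D) : Set ℕ)).coe.Adj pp
          ⟨(r : ℕ), hrmem⟩ := by
        show ((addVertex G1 x {a,b,c}).induce (↑(sideV1 G1 D) : Set ℕ)).Adj ↑pp _
        rw [SimpleGraph.Subgraph.induce_adj]
        exact ⟨pp.2, hrmem, by rw [hpp]; exact Or.inl hG1⟩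
      exact hadjW.reachable.trans (ih hv ⟨(r : ℕ), hrmem⟩ cc rfl hcc)

lemma conn_sideV1 (st : Setup G1 G2 a b c x) {D : Finset ℕ}
    (hconn : ((addEdge (G1 ⊔ G2) x c).induce ↑D).coe.Connected)
    (haD : a ∉ D) (hbD : b ∉ D) (hcD : c ∈ D) :
    ((addVertex G1 x {a,b,c}).induce (↑(sideV1 G1 D) : Set ℕ)).coe.Connected := by
  have hcmem : c ∈ (↑(sideV1 G1 D) : Set ℕ) :=
    Finset.mem_coe.2 (mem_sideV1.2 ⟨hcD, st.hcV1⟩)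
  rw [SimpleGraph.connected_iff]
  constructor
  · intro pp qq
    have hppD : (pp : ℕ) ∈ (↑D : Set ℕ) :=
      Finset.mem_coe.2 (mem_sideV1.1 (Finset.mem_coe.1 pp.2)).1
    have hqqD : (qq : ℕ) ∈ (↑D : Set ℕ) :=
      Finset.mem_coe.2 (mem_sideV1.1 (Finset.mem_coe.1 qq.2)).1
    obtain ⟨w1⟩ := hconn.preconnected ⟨↑pp, hppD⟩ ⟨c, Finset.mem_coe.2 hcD⟩
    obtain ⟨w2⟩ := hconn.preconnected ⟨↑qq, hqqD⟩ ⟨c, Finset.mem_coe.2 hcD⟩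
    have hr1 := st.reach2 haD hbD _ _ w1 rfl pp ⟨c, hcmem⟩ rfl rfl
    have hr2 := st.reach2 haD hbD _ _ w2 rfl qq ⟨c, hcmem⟩ rfl rfl
    exact hr1.trans hr2.symm
  · exact ⟨⟨c, hcmem⟩⟩

lemma conn_transfer (st : Setup G1 G2 a b c x) {D : Finset ℕ}
    (hD : (↑D : Set ℕ) ⊆ G1.verts ∪ {x})
    (hconn : ((addEdge (G1 ⊔ G2) x c).induce ↑D).coe.Connected) :
    ((addVertex G1 x {a,b,c}).induce (↑D : Set ℕ)).coe.Connected := by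
  rw [← st.induce_eq_W1 hD]
  exact hconn

end Setup
namespace Setup

variable {G1 G2 : FGraph} {a b c x : ℕ}

lemma SmemV (st : Setup G1 G2 a b c x) {s : ℕ} (h : s = a ∨ s = b ∨ s = c ∨ s = x) :
    s ∈ G1.verts ∪ {x} := by
  rcases h with rfl | rfl | rfl | rfl
  · exact Or.inl st.haV1
  · exact Or.inl st.hbV1
  · exact Or.inl st.hcV1
  · exact Or.inr rfl

lemma push (st : Setup G1 G2 a b c x) (K : FGraph) (β : ℕ → Finset ℕ)
    (hm : MinModel K (addEdge (G1 ⊔ G2) x c) β)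
    (hside : ∀ u ∈ K.verts, ∃ p ∈ β u, p ∈ G1.verts ∪ {x}) :
    IsMinor K (addVertex G1 x {a, b, c}) := by
  obtain ⟨hm1, hm2, hm3⟩ := hm
  have key : ∀ u ∈ K.verts, (¬ ∃ s ∈ β u, s = a ∨ s = b ∨ s = c ∨ s = x) →
      ∀ q ∈ β u, q ∈ G1.verts := by
    intro u hu hnoS
    obtain ⟨p, hp, hpV⟩ := hside u hu
    have hpV1 : p ∈ G1.verts := by
      rcases hpV with h | h
      · exact h
      · exact absurd ⟨p, hp, Or.inr (Or.inr (Or.inr h))⟩ hnoS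
    have haD : a ∉ β u := fun h => hnoS ⟨a, h, Or.inl rfl⟩
    have hbD : b ∉ β u := fun h => hnoS ⟨b, h, Or.inr (Or.inl rfl)⟩
    have hxD : x ∉ β u := fun h => hnoS ⟨x, h, Or.inr (Or.inr (Or.inr rfl))⟩
    exact st.confine1 (hm1 u hu).2.2 haD hbD hxD hp hpV1
  have getS : ∀ w ∈ K.verts, ∀ r ∈ β w, r ∉ G1.verts ∪ {x} →
      ∃ s ∈ β w, s = a ∨ s = b ∨ s = c ∨ s = x := by
    intro w hw r hr hrV
    by_contra hno
    exact hrV (Or.inl (key w hw hno r hr))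
  refine ⟨fun u => side1 G1 x (β u), ?_, ?_, ?_⟩
  · intro u hu
    obtain ⟨p, hp, hpV⟩ := hside u hu
    refine ⟨⟨p, mem_side1.2 ⟨hp, hpV⟩⟩, ?_, ?_⟩
    · intro y hy
      have hy' := mem_side1.1 (Finset.mem_coe.1 hy)
      show y ∈ insert x G1.verts
      rcases hy'.2 with h | h
      · exact Set.mem_insert_of_mem _ h
      · exact h ▸ Set.mem_insert _ _
    · by_cases hS : ∃ s ∈ β u, s = a ∨ s = b ∨ s = c ∨ s = x
      · obtain ⟨s0, hs0D, hs0S⟩ := hS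
        exact st.conn_side1 (hm1 u hu).2.2 hs0D hs0S
      · have hall := key u hu hS
        have heq : side1 G1 x (β u) = β u := by
          ext y
          rw [mem_side1]
          exact ⟨fun h => h.1, fun h => ⟨h, Or.inl (hall y h)⟩⟩
        show ((addVertex G1 x {a, b, c}).induce (↑(side1 G1 x (β u)) : Set ℕ)).coe.Connected
        rw [heq]
        exact st.conn_transfer (fun y hy => Or.inl (hall y (Finset.mem_coe.1 hy)))
          (hm1 u hu).2.2
  · intro u hu v hv huv
    rw [Finset.disjoint_left]
    intro y hy1 hy2
    exact Finset.disjoint_left.1 (hm2 u hu v hv huv) (mem_side1.1 hy1).1 (mem_side1.1 hy2).1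
  · intro u v hadj
    have hu : u ∈ K.verts := K.edge_vert hadj
    have hv : v ∈ K.verts := K.edge_vert (K.adj_symm hadj)
    have hne : u ≠ v := (SimpleGraph.top_adj _ _).1 (K.adj_sub hadj)
    obtain ⟨p, hp, q, hq, hpq⟩ := hm3 u v hadj
    by_cases hp1 : p ∈ G1.verts ∪ {x} <;> by_cases hq1 : q ∈ G1.verts ∪ {x}
    · exact ⟨p, mem_side1.2 ⟨hp, hp1⟩, q, mem_side1.2 ⟨hq, hq1⟩, (st.agree hp1 hq1).1 hpq⟩
    · obtain ⟨s2, hs2, hs2S⟩ := getS v hv q hq hq1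
      by_cases hpS : p = a ∨ p = b ∨ p = c ∨ p = x
      · have hne' : p ≠ s2 := fun e =>
          Finset.disjoint_left.1 (hm2 u hu v hv hne) hp (e ▸ hs2)
        exact ⟨p, mem_side1.2 ⟨hp, st.SmemV hpS⟩, s2, mem_side1.2 ⟨hs2, st.SmemV hs2S⟩,
          st.Sadj hpS hs2S hne'⟩
      · push_neg at hpS
        obtain ⟨hpa, hpb, hpc, hpx⟩ := hpS
        have hpV1 : p ∈ G1.verts := by
          rcases hp1 with h | h
          · exact h
          · exact absurd h hpx
        have hG1 : G1.Adj p q := st.adjA hpV1 hpa hpb hpc hpq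
        exact absurd (Or.inl (G1.edge_vert (G1.adj_symm hG1))) hq1
    · obtain ⟨s1, hs1, hs1S⟩ := getS u hu p hp hp1
      by_cases hqS : q = a ∨ q = b ∨ q = c ∨ q = x
      · have hne' : s1 ≠ q := fun e =>
          Finset.disjoint_left.1 (hm2 u hu v hv hne) hs1 (e ▸ hq)
        exact ⟨s1, mem_side1.2 ⟨hs1, st.SmemV hs1S⟩, q, mem_side1.2 ⟨hq, st.SmemV hqS⟩,
          st.Sadj hs1S hqS hne'⟩
      · push_neg at hqS
        obtain ⟨hqa, hqb, hqc, hqx⟩ := hqS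
        have hqV1 : q ∈ G1.verts := by
          rcases hq1 with h | h
          · exact h
          · exact absurd h hqx
        have hG1 : G1.Adj q p := st.adjA hqV1 hqa hqb hqc ((addEdge (G1 ⊔ G2) x c).adj_symm hpq)
        exact absurd (Or.inl (G1.edge_vert (G1.adj_symm hG1))) hp1
    · obtain ⟨s1, hs1, hs1S⟩ := getS u hu p hp hp1
      obtain ⟨s2, hs2, hs2S⟩ := getS v hv q hq hq1
      have hne' : s1 ≠ s2 := fun e =>
        Finset.disjoint_left.1 (hm2 u hu v hv hne) hs1 (e ▸ hs2)
      exact ⟨s1, mem_side1.2 ⟨hs1, st.SmemV hs1S⟩, s2, mem_side1.2 ⟨hs2, st.SmemV hs2S⟩,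
        st.Sadj hs1S hs2S hne'⟩

end Setup
lemma K33_adj {u v : ℕ} : K33g.Adj u v ↔ (u < 3 ∧ 3 ≤ v ∧ v < 6) ∨ (v < 3 ∧ 3 ≤ u ∧ u < 6) :=
  Iff.rfl

lemma K33_mem {u : ℕ} (h : u < 6) : u ∈ K33g.verts := h

lemma relabelModel {Γ : FGraph} {β : ℕ → Finset ℕ} (hm : MinModel K33g Γ β) (σ : ℕ → ℕ)
    (hv : ∀ u, u < 6 → σ u < 6) (hinj : ∀ u, u < 6 → ∀ v, v < 6 → σ u = σ v → u = v)
    (hadj : ∀ u v, K33g.Adj u v → K33g.Adj (σ u) (σ v)) :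
    MinModel K33g Γ (fun n => β (σ n)) := by
  obtain ⟨h1, h2, h3⟩ := hm
  refine ⟨fun u hu => h1 (σ u) (K33_mem (hv u hu)), ?_, fun u v h => h3 _ _ (hadj u v h)⟩
  intro u hu v hv' huv
  exact h2 (σ u) (K33_mem (hv u hu)) (σ v) (K33_mem (hv v hv'))
    (fun e => huv (hinj u hu v hv' e))

lemma permW_model {Γ : FGraph} {β : ℕ → Finset ℕ} (hm : MinModel K33g Γ β)
    (p3 p4 p5 : ℕ) (h3 : 3 ≤ p3 ∧ p3 < 6) (h4 : 3 ≤ p4 ∧ p4 < 6) (h5 : 3 ≤ p5 ∧ p5 < 6)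
    (hne : p3 ≠ p4 ∧ p3 ≠ p5 ∧ p4 ≠ p5) :
    MinModel K33g Γ (fun n => β (if n = 3 then p3 else if n = 4 then p4 else
      if n = 5 then p5 else n)) := by
  refine relabelModel hm _ ?_ ?_ ?_
  · intro u hu; split_ifs <;> omega
  · intro u hu v hv h; split_ifs at h <;> omega
  · intro u v h
    refine K33_adj.2 ?_
    have h' := K33_adj.1 h
    split_ifs <;> omega

lemma swap01_model {Γ : FGraph} {β : ℕ → Finset ℕ} (hm : MinModel K33g Γ β) :
    MinModel K33g Γ (fun n => β (if n = 0 then 1 else if n = 1 then 0 else n)) := by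
  refine relabelModel hm _ ?_ ?_ ?_
  · intro u hu; split_ifs <;> omega
  · intro u hu v hv h; split_ifs at h <;> omega
  · intro u v h
    refine K33_adj.2 ?_
    have h' := K33_adj.1 h
    split_ifs <;> omega

namespace Setup

variable {G1 G2 : FGraph} {a b c x : ℕ}

lemma adjB (st : Setup G1 G2 a b c x) {p q : ℕ} (hp2 : p ∈ G2.verts) (hpa : p ≠ a)
    (hpb : p ≠ b) (hpx : p ≠ x) (h : (addEdge (G1 ⊔ G2) x c).Adj p q) : G2.Adj p q := by
  have h' : (addEdge (G2 ⊔ G1) c x).Adj p q := st.Hsym ▸ h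
  exact st.symm.adjA hp2 hpa hpb hpx h'

/-- The final construction: a K33 model in `H` in the special configuration is pushed
to a K33 model in `W1`. -/
lemma final (st : Setup G1 G2 a b c x) (β : ℕ → Finset ℕ)
    (hm : MinModel K33g (addEdge (G1 ⊔ G2) x c) β)
    (hD0 : ∀ p ∈ β 0, p ∈ G1.verts) (hD0S : ∀ s ∈ β 0, s ≠ a ∧ s ≠ b ∧ s ≠ c ∧ s ≠ x)
    (hD2 : ∀ p ∈ β 2, p ∈ G1.verts) (hD2S : ∀ s ∈ β 2, s ≠ a ∧ s ≠ b ∧ s ≠ c ∧ s ≠ x)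
    (ha3 : a ∈ β 3) (hb4 : b ∈ β 4) (hc5 : c ∈ β 5) (hx5 : x ∈ β 5) :
    IsMinor K33g (addVertex G1 x {a, b, c}) := by
  obtain ⟨hm1, hm2, hm3⟩ := hm
  have hd : ∀ i j : ℕ, i < 6 → j < 6 → i ≠ j → Disjoint (β i) (β j) :=
    fun i j hi hj hij => hm2 i (K33_mem hi) j (K33_mem hj) hij
  have ha5 : a ∉ β 5 := fun h =>
    Finset.disjoint_left.1 (hd 3 5 (by norm_num) (by norm_num) (by norm_num)) ha3 h
  have hb5 : b ∉ β 5 := fun h =>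
    Finset.disjoint_left.1 (hd 4 5 (by norm_num) (by norm_num) (by norm_num)) hb4 h
  set β' : ℕ → Finset ℕ := fun n => if n = 0 then β 0 else if n = 1 then {x} else
    if n = 2 then β 2 else if n = 3 then side1 G1 x (β 3) else
    if n = 4 then side1 G1 x (β 4) else if n = 5 then sideV1 G1 (β 5) else ∅ with hβ'
  have hb0 : β' 0 = β 0 := rfl
  have hb1 : β' 1 = {x} := rfl
  have hb2 : β' 2 = β 2 := rfl
  have hb3 : β' 3 = side1 G1 x (β 3) := rfl
  have hb4' : β' 4 = side1 G1 x (β 4) := rfl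
  have hb5' : β' 5 = sideV1 G1 (β 5) := rfl
  have hsrc : ∀ i, i < 6 → β' i ⊆ β (if i = 1 then 5 else i) := by
    intro i hi
    interval_cases i
    · exact fun y hy => hy
    · intro y hy
      rw [hb1, Finset.mem_singleton] at hy
      rw [hy]; exact hx5
    · exact fun y hy => hy
    · intro y hy; exact (mem_side1.1 hy).1
    · intro y hy; exact (mem_side1.1 hy).1
    · intro y hy; exact (mem_sideV1.1 hy).1
  refine ⟨β', ?_, ?_, ?_⟩
  · intro u hu
    have hu6 : u < 6 := hu
    interval_cases u
    · exact ⟨(hm1 0 (K33_mem (by norm_num))).1,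
        fun y hy => Set.mem_insert_of_mem _ (hD0 y (Finset.mem_coe.1 hy)),
        st.conn_transfer (fun y hy => Or.inl (hD0 y (Finset.mem_coe.1 hy)))
          (hm1 0 (K33_mem (by norm_num))).2.2⟩
    · refine ⟨⟨x, Finset.mem_singleton_self x⟩, ?_, singleton_conn _ x⟩
      intro y hy
      rw [hb1] at hy
      have : y = x := by simpa using hy
      rw [this]; exact Set.mem_insert _ _
    · exact ⟨(hm1 2 (K33_mem (by norm_num))).1,
        fun y hy => Set.mem_insert_of_mem _ (hD2 y (Finset.mem_coe.1 hy)),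
        st.conn_transfer (fun y hy => Or.inl (hD2 y (Finset.mem_coe.1 hy)))
          (hm1 2 (K33_mem (by norm_num))).2.2⟩
    · refine ⟨⟨a, mem_side1.2 ⟨ha3, Or.inl st.haV1⟩⟩, ?_, st.conn_side1
        (hm1 3 (K33_mem (by norm_num))).2.2 ha3 (Or.inl rfl)⟩
      intro y hy
      have hy' := mem_side1.1 (Finset.mem_coe.1 hy)
      rcases hy'.2 with h | h
      · exact Set.mem_insert_of_mem _ h
      · exact h ▸ Set.mem_insert _ _
    · refine ⟨⟨b, mem_side1.2 ⟨hb4, Or.inl st.hbV1⟩⟩, ?_, st.conn_side1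
        (hm1 4 (K33_mem (by norm_num))).2.2 hb4 (Or.inr (Or.inl rfl))⟩
      intro y hy
      have hy' := mem_side1.1 (Finset.mem_coe.1 hy)
      rcases hy'.2 with h | h
      · exact Set.mem_insert_of_mem _ h
      · exact h ▸ Set.mem_insert _ _
    · exact ⟨⟨c, mem_sideV1.2 ⟨hc5, st.hcV1⟩⟩,
        fun y hy => Set.mem_insert_of_mem _ (mem_sideV1.1 (Finset.mem_coe.1 hy)).2,
        st.conn_sideV1 (hm1 5 (K33_mem (by norm_num))).2.2 ha5 hb5 hc5⟩
  · intro u hu v hv huv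
    have hu6 : u < 6 := hu
    have hv6 : v < 6 := hv
    by_cases hsp : (u = 1 ∧ v = 5) ∨ (u = 5 ∧ v = 1)
    · rcases hsp with ⟨rfl, rfl⟩ | ⟨rfl, rfl⟩
      · rw [hb1, hb5', Finset.disjoint_left]
        intro y h1 h2
        rw [Finset.mem_singleton] at h1
        exact st.hx (h1 ▸ (mem_sideV1.1 h2).2)
      · rw [hb1, hb5', Finset.disjoint_left]
        intro y h1 h2
        rw [Finset.mem_singleton] at h2
        exact st.hx (h2 ▸ (mem_sideV1.1 h1).2)
    · have hne' : (if u = 1 then 5 else u) ≠ (if v = 1 then 5 else v) := by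
        split_ifs <;> omega
      rw [Finset.disjoint_left]
      intro y h1 h2
      exact Finset.disjoint_left.1
        (hd _ _ (by split_ifs <;> omega) (by split_ifs <;> omega) hne')
        (hsrc u hu6 h1) (hsrc v hv6 h2)
  · have base : ∀ i j, i < 3 → 3 ≤ j → j < 6 →
        ∃ p ∈ β' i, ∃ q ∈ β' j, (addVertex G1 x {a, b, c}).Adj p q := by
      intro i j hi hj1 hj2
      interval_cases i <;> interval_cases j
      · obtain ⟨p, hp, q, hq, hpq⟩ := hm3 0 3 (K33_adj.2 (Or.inl (by norm_num)))
        obtain ⟨hpa, hpb, hpc, hpx⟩ := hD0S p hp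
        have hG1 : G1.Adj p q := st.adjA (hD0 p hp) hpa hpb hpc hpq
        exact ⟨p, hp, q, mem_side1.2 ⟨hq, Or.inl (G1.edge_vert (G1.adj_symm hG1))⟩, Or.inl hG1⟩
      · obtain ⟨p, hp, q, hq, hpq⟩ := hm3 0 4 (K33_adj.2 (Or.inl (by norm_num)))
        obtain ⟨hpa, hpb, hpc, hpx⟩ := hD0S p hp
        have hG1 : G1.Adj p q := st.adjA (hD0 p hp) hpa hpb hpc hpq
        exact ⟨p, hp, q, mem_side1.2 ⟨hq, Or.inl (G1.edge_vert (G1.adj_symm hG1))⟩, Or.inl hG1⟩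
      · obtain ⟨p, hp, q, hq, hpq⟩ := hm3 0 5 (K33_adj.2 (Or.inl (by norm_num)))
        obtain ⟨hpa, hpb, hpc, hpx⟩ := hD0S p hp
        have hG1 : G1.Adj p q := st.adjA (hD0 p hp) hpa hpb hpc hpq
        exact ⟨p, hp, q, mem_sideV1.2 ⟨hq, G1.edge_vert (G1.adj_symm hG1)⟩, Or.inl hG1⟩
      · exact ⟨x, Finset.mem_singleton_self x, a, mem_side1.2 ⟨ha3, Or.inl st.haV1⟩,
          st.W1adj_xs (Or.inl rfl)⟩
      · exact ⟨x, Finset.mem_singleton_self x, b, mem_side1.2 ⟨hb4, Or.inl st.hbV1⟩,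
          st.W1adj_xs (Or.inr (Or.inl rfl))⟩
      · exact ⟨x, Finset.mem_singleton_self x, c, mem_sideV1.2 ⟨hc5, st.hcV1⟩,
          st.W1adj_xs (Or.inr (Or.inr rfl))⟩
      · obtain ⟨p, hp, q, hq, hpq⟩ := hm3 2 3 (K33_adj.2 (Or.inl (by norm_num)))
        obtain ⟨hpa, hpb, hpc, hpx⟩ := hD2S p hp
        have hG1 : G1.Adj p q := st.adjA (hD2 p hp) hpa hpb hpc hpq
        exact ⟨p, hp, q, mem_side1.2 ⟨hq, Or.inl (G1.edge_vert (G1.adj_symm hG1))⟩, Or.inl hG1⟩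
      · obtain ⟨p, hp, q, hq, hpq⟩ := hm3 2 4 (K33_adj.2 (Or.inl (by norm_num)))
        obtain ⟨hpa, hpb, hpc, hpx⟩ := hD2S p hp
        have hG1 : G1.Adj p q := st.adjA (hD2 p hp) hpa hpb hpc hpq
        exact ⟨p, hp, q, mem_side1.2 ⟨hq, Or.inl (G1.edge_vert (G1.adj_symm hG1))⟩, Or.inl hG1⟩
      · obtain ⟨p, hp, q, hq, hpq⟩ := hm3 2 5 (K33_adj.2 (Or.inl (by norm_num)))
        obtain ⟨hpa, hpb, hpc, hpx⟩ := hD2S p hp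
        have hG1 : G1.Adj p q := st.adjA (hD2 p hp) hpa hpb hpc hpq
        exact ⟨p, hp, q, mem_sideV1.2 ⟨hq, G1.edge_vert (G1.adj_symm hG1)⟩, Or.inl hG1⟩
    intro u v hadj
    rcases K33_adj.1 hadj with ⟨h1, h2, h3⟩ | ⟨h1, h2, h3⟩
    · exact base u v h1 h2 h3
    · obtain ⟨p, hp, q, hq, hpq⟩ := base v u h1 h2 h3
      exact ⟨q, hq, p, hp, (addVertex G1 x {a, b, c}).adj_symm hpq⟩

end Setup
namespace Setup

variable {G1 G2 : FGraph} {a b c x : ℕ}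

lemma endgame (st : Setup G1 G2 a b c x) (δ : ℕ → Finset ℕ)
    (hm : MinModel K33g (addEdge (G1 ⊔ G2) x c) δ)
    (hδ0 : ∀ p ∈ δ 0, p ∉ G2.verts ∪ {c}) (hδ1 : ∀ p ∈ δ 1, p ∉ G1.verts ∪ {x})
    (ha3 : a ∈ δ 3) (hb4 : b ∈ δ 4) (hc5 : c ∈ δ 5) (hx5 : x ∈ δ 5)
    (hW1 : Planar (addVertex G1 x {a, b, c})) (hW2 : Planar (addVertex G2 c {a, b, x})) :
    False := by
  have hd : ∀ i j : ℕ, i < 6 → j < 6 → i ≠ j → Disjoint (δ i) (δ j) :=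
    fun i j hi hj hij => hm.2.1 i (K33_mem hi) j (K33_mem hj) hij
  have hvert : ∀ i, i < 6 → ∀ p ∈ δ i, p ∈ G1.verts ∪ G2.verts := by
    intro i hi p hp
    have := (hm.1 i (K33_mem hi)).2.1 (Finset.mem_coe.2 hp)
    rwa [st.Hverts] at this
  have hD0 : ∀ p ∈ δ 0, p ∈ G1.verts := by
    intro p hp
    rcases hvert 0 (by norm_num) p hp with h | h
    · exact h
    · exact absurd (Or.inl h) (hδ0 p hp)
  have hD0S : ∀ s ∈ δ 0, s ≠ a ∧ s ≠ b ∧ s ≠ c ∧ s ≠ x := by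
    intro s hs
    exact ⟨fun e => hδ0 s hs (Or.inl (e.symm ▸ st.haV2)),
      fun e => hδ0 s hs (Or.inl (e.symm ▸ st.hbV2)),
      fun e => hδ0 s hs (Or.inr e),
      fun e => hδ0 s hs (Or.inl (e.symm ▸ st.hxV2))⟩
  have hD1 : ∀ p ∈ δ 1, p ∈ G2.verts := by
    intro p hp
    rcases hvert 1 (by norm_num) p hp with h | h
    · exact absurd (Or.inl h) (hδ1 p hp)
    · exact h
  have hD1S : ∀ s ∈ δ 1, s ≠ a ∧ s ≠ b ∧ s ≠ x ∧ s ≠ c := by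
    intro s hs
    exact ⟨fun e => hδ1 s hs (Or.inl (e.symm ▸ st.haV1)),
      fun e => hδ1 s hs (Or.inl (e.symm ▸ st.hbV1)),
      fun e => hδ1 s hs (Or.inr e),
      fun e => hδ1 s hs (Or.inl (e.symm ▸ st.hcV1))⟩
  have hS2 : ∀ s ∈ δ 2, s ≠ a ∧ s ≠ b ∧ s ≠ c ∧ s ≠ x := by
    intro s hs
    refine ⟨fun e => ?_, fun e => ?_, fun e => ?_, fun e => ?_⟩
    · exact Finset.disjoint_left.1 (hd 2 3 (by norm_num) (by norm_num) (by norm_num))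
        hs (e ▸ ha3)
    · exact Finset.disjoint_left.1 (hd 2 4 (by norm_num) (by norm_num) (by norm_num))
        hs (e ▸ hb4)
    · exact Finset.disjoint_left.1 (hd 2 5 (by norm_num) (by norm_num) (by norm_num))
        hs (e ▸ hc5)
    · exact Finset.disjoint_left.1 (hd 2 5 (by norm_num) (by norm_num) (by norm_num))
        hs (e ▸ hx5)
  have hna2 : a ∉ δ 2 := fun h => (hS2 a h).1 rfl
  have hnb2 : b ∉ δ 2 := fun h => (hS2 b h).2.1 rfl
  have hnc2 : c ∉ δ 2 := fun h => (hS2 c h).2.2.1 rfl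
  have hnx2 : x ∉ δ 2 := fun h => (hS2 x h).2.2.2 rfl
  obtain ⟨p2, hp2⟩ := (hm.1 2 (K33_mem (by norm_num))).1
  by_cases hp2V1 : p2 ∈ G1.verts
  · have hsub := st.confine1 (hm.1 2 (K33_mem (by norm_num))).2.2 hna2 hnb2 hnx2 hp2 hp2V1
    exact hW1.2 (st.final δ hm hD0 hD0S hsub hS2 ha3 hb4 hc5 hx5)
  · have hp2V2 : p2 ∈ G2.verts := by
      rcases hvert 2 (by norm_num) p2 hp2 with h | h
      · exact absurd h hp2V1
      · exact h
    have hsub := st.confine2 (hm.1 2 (K33_mem (by norm_num))).2.2 hna2 hnb2 hnc2 hp2 hp2V2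
    have hmsw := swap01_model hm
    have hmsw' : MinModel K33g (addEdge (G2 ⊔ G1) c x)
        (fun n => δ (if n = 0 then 1 else if n = 1 then 0 else n)) := st.Hsym ▸ hmsw
    refine hW2.2 (st.symm.final _ hmsw' ?_ ?_ ?_ ?_ ?_ ?_ ?_ ?_)
    · exact hD1
    · exact hD1S
    · exact hsub
    · exact fun s hs => ⟨(hS2 s hs).1, (hS2 s hs).2.1, (hS2 s hs).2.2.2, (hS2 s hs).2.2.1⟩
    · exact ha3
    · exact hb4
    · exact hx5
    · exact hc5

lemma k33_continue (st : Setup G1 G2 a b c x) (γ : ℕ → Finset ℕ)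
    (hm : MinModel K33g (addEdge (G1 ⊔ G2) x c) γ)
    (hγ0 : ∀ p ∈ γ 0, p ∉ G2.verts ∪ {c}) (hγ1 : ∀ p ∈ γ 1, p ∉ G1.verts ∪ {x})
    (hW1 : Planar (addVertex G1 x {a, b, c})) (hW2 : Planar (addVertex G2 c {a, b, x})) :
    False := by
  have hvert : ∀ i, i < 6 → ∀ p ∈ γ i, p ∈ G1.verts ∪ G2.verts := by
    intro i hi p hp
    have := (hm.1 i (K33_mem hi)).2.1 (Finset.mem_coe.2 hp)
    rwa [st.Hverts] at this
  have hγ0' : ∀ p ∈ γ 0, p ∈ G1.verts ∧ p ≠ a ∧ p ≠ b ∧ p ≠ c ∧ p ≠ x := by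
    intro p hp
    refine ⟨?_, fun e => hγ0 p hp (Or.inl (e.symm ▸ st.haV2)),
      fun e => hγ0 p hp (Or.inl (e.symm ▸ st.hbV2)),
      fun e => hγ0 p hp (Or.inr e),
      fun e => hγ0 p hp (Or.inl (e.symm ▸ st.hxV2))⟩
    rcases hvert 0 (by norm_num) p hp with h | h
    · exact h
    · exact absurd (Or.inl h) (hγ0 p hp)
  have hγ1' : ∀ p ∈ γ 1, p ∈ G2.verts ∧ p ≠ a ∧ p ≠ b ∧ p ≠ x ∧ p ≠ c := by
    intro p hp
    refine ⟨?_, fun e => hγ1 p hp (Or.inl (e.symm ▸ st.haV1)),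
      fun e => hγ1 p hp (Or.inl (e.symm ▸ st.hbV1)),
      fun e => hγ1 p hp (Or.inr e),
      fun e => hγ1 p hp (Or.inl (e.symm ▸ st.hcV1))⟩
    rcases hvert 1 (by norm_num) p hp with h | h
    · exact absurd (Or.inl h) (hγ1 p hp)
    · exact h
  have tok : ∀ w, 3 ≤ w → w < 6 → a ∈ γ w ∨ b ∈ γ w ∨ (c ∈ γ w ∧ x ∈ γ w) := by
    intro w hw1 hw2
    obtain ⟨p0, hp0, q, hqw, hpq⟩ := hm.2.2 0 w (K33_adj.2 (Or.inl ⟨by norm_num, hw1, hw2⟩))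
    obtain ⟨hp0V, hp0a, hp0b, hp0c, hp0x⟩ := hγ0' p0 hp0
    have hqV1 : q ∈ G1.verts := G1.edge_vert (G1.adj_symm (st.adjA hp0V hp0a hp0b hp0c hpq))
    obtain ⟨p1, hp1, q', hq'w, hpq'⟩ := hm.2.2 1 w (K33_adj.2 (Or.inl ⟨by norm_num, hw1, hw2⟩))
    obtain ⟨hp1V, hp1a, hp1b, hp1x, hp1c⟩ := hγ1' p1 hp1
    have hq'V2 : q' ∈ G2.verts := G2.edge_vert (G2.adj_symm (st.adjB hp1V hp1a hp1b hp1x hpq'))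
    by_cases haw : a ∈ γ w
    · exact Or.inl haw
    by_cases hbw : b ∈ γ w
    · exact Or.inr (Or.inl hbw)
    by_cases hxw : x ∈ γ w
    · by_cases hcw : c ∈ γ w
      · exact Or.inr (Or.inr ⟨hcw, hxw⟩)
      · exfalso
        have hsub := st.confine2 (hm.1 w (K33_mem hw2)).2.2 haw hbw hcw hxw st.hxV2
        rcases st.mem_ab hqV1 (hsub q hqw) with e | e
        · exact haw (e ▸ hqw)
        · exact hbw (e ▸ hqw)
    · exfalso
      have hsub := st.confine1 (hm.1 w (K33_mem hw2)).2.2 haw hbw hxw hqw hqV1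
      rcases st.mem_ab (hsub q' hq'w) hq'V2 with e | e
      · exact haw (e ▸ hq'w)
      · exact hbw (e ▸ hq'w)
  have hdj : ∀ i j : ℕ, i < 6 → j < 6 → i ≠ j → ∀ y, y ∈ γ i → y ∈ γ j → False :=
    fun i j hi hj hij y h1 h2 =>
      Finset.disjoint_left.1 (hm.2.1 i (K33_mem hi) j (K33_mem hj) hij) h1 h2
  have t3 := tok 3 (by norm_num) (by norm_num)
  have t4 := tok 4 (by norm_num) (by norm_num)
  have t5 := tok 5 (by norm_num) (by norm_num)
  have pnum : ∀ p q r : ℕ, p = 3 ∨ p = 4 ∨ p = 5 → (3 ≤ p ∧ p < 6) := by omega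
  rcases t3 with h3 | h3 | h3 <;> rcases t4 with h4 | h4 | h4 <;> rcases t5 with h5 | h5 | h5
  · exact hdj 3 4 (by norm_num) (by norm_num) (by norm_num) a h3 h4
  · exact hdj 3 4 (by norm_num) (by norm_num) (by norm_num) a h3 h4
  · exact hdj 3 4 (by norm_num) (by norm_num) (by norm_num) a h3 h4
  · exact hdj 3 5 (by norm_num) (by norm_num) (by norm_num) a h3 h5
  · exact hdj 4 5 (by norm_num) (by norm_num) (by norm_num) b h4 h5
  · exact st.endgame γ hm hγ0 hγ1 h3 h4 h5.1 h5.2 hW1 hW2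
  · exact hdj 3 5 (by norm_num) (by norm_num) (by norm_num) a h3 h5
  · exact st.endgame _ (permW_model hm 3 5 4 (by norm_num) (by norm_num) (by norm_num)
      ⟨by norm_num, by norm_num, by norm_num⟩) hγ0 hγ1 h3 h5 h4.1 h4.2 hW1 hW2
  · exact hdj 4 5 (by norm_num) (by norm_num) (by norm_num) c h4.1 h5.1
  · exact hdj 4 5 (by norm_num) (by norm_num) (by norm_num) a h4 h5
  · exact hdj 3 5 (by norm_num) (by norm_num) (by norm_num) b h3 h5
  · exact st.endgame _ (permW_model hm 4 3 5 (by norm_num) (by norm_num) (by norm_num)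
      ⟨by norm_num, by norm_num, by norm_num⟩) hγ0 hγ1 h4 h3 h5.1 h5.2 hW1 hW2
  · exact hdj 3 4 (by norm_num) (by norm_num) (by norm_num) b h3 h4
  · exact hdj 3 4 (by norm_num) (by norm_num) (by norm_num) b h3 h4
  · exact hdj 3 4 (by norm_num) (by norm_num) (by norm_num) b h3 h4
  · exact st.endgame _ (permW_model hm 5 3 4 (by norm_num) (by norm_num) (by norm_num)
      ⟨by norm_num, by norm_num, by norm_num⟩) hγ0 hγ1 h5 h3 h4.1 h4.2 hW1 hW2
  · exact hdj 3 5 (by norm_num) (by norm_num) (by norm_num) b h3 h5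
  · exact hdj 4 5 (by norm_num) (by norm_num) (by norm_num) c h4.1 h5.1
  · exact hdj 4 5 (by norm_num) (by norm_num) (by norm_num) a h4 h5
  · exact st.endgame _ (permW_model hm 4 5 3 (by norm_num) (by norm_num) (by norm_num)
      ⟨by norm_num, by norm_num, by norm_num⟩) hγ0 hγ1 h4 h5 h3.1 h3.2 hW1 hW2
  · exact hdj 3 5 (by norm_num) (by norm_num) (by norm_num) c h3.1 h5.1
  · exact st.endgame _ (permW_model hm 5 4 3 (by norm_num) (by norm_num) (by norm_num)
      ⟨by norm_num, by norm_num, by norm_num⟩) hγ0 hγ1 h5 h4 h3.1 h3.2 hW1 hW2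
  · exact hdj 4 5 (by norm_num) (by norm_num) (by norm_num) b h4 h5
  · exact hdj 3 5 (by norm_num) (by norm_num) (by norm_num) c h3.1 h5.1
  · exact hdj 3 4 (by norm_num) (by norm_num) (by norm_num) c h3.1 h4.1
  · exact hdj 3 4 (by norm_num) (by norm_num) (by norm_num) c h3.1 h4.1
  · exact hdj 3 4 (by norm_num) (by norm_num) (by norm_num) c h3.1 h4.1

lemma partB_main (st : Setup G1 G2 a b c x)
    (hW1 : Planar (addVertex G1 x {a, b, c})) (hW2 : Planar (addVertex G2 c {a, b, x})) :
    Planar (addEdge (G1 ⊔ G2) x c) := by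
  constructor
  · rintro ⟨β, hm⟩
    by_cases hall1 : ∀ u ∈ K5g.verts, ∃ p ∈ β u, p ∈ G1.verts ∪ {x}
    · exact hW1.1 (st.push K5g β hm hall1)
    by_cases hall2 : ∀ u ∈ K5g.verts, ∃ p ∈ β u, p ∈ G2.verts ∪ {c}
    · exact hW2.1 (st.symm.push K5g β (st.Hsym ▸ hm) hall2)
    push_neg at hall1 hall2
    obtain ⟨u, hu, hup⟩ := hall1
    obtain ⟨v, hv, hvp⟩ := hall2
    have hvertu : ∀ p ∈ β u, p ∈ G1.verts ∪ G2.verts := by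
      intro p hp
      have := (hm.1 u hu).2.1 (Finset.mem_coe.2 hp)
      rwa [st.Hverts] at this
    have hvertv : ∀ p ∈ β v, p ∈ G1.verts ∪ G2.verts := by
      intro p hp
      have := (hm.1 v hv).2.1 (Finset.mem_coe.2 hp)
      rwa [st.Hverts] at this
    have hne : u ≠ v := by
      rintro rfl
      obtain ⟨p, hp⟩ := (hm.1 u hu).1
      rcases hvertu p hp with h | h
      · exact hup p hp (Or.inl h)
      · exact hvp p hp (Or.inl h)
    have hadj : K5g.Adj u v := ⟨Finset.mem_coe.1 hu, Finset.mem_coe.1 hv, hne⟩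
    obtain ⟨p, hp, q, hq, hpq⟩ := hm.2.2 u v hadj
    have hq' := hvp q hq
    have hqV1 : q ∈ G1.verts := by
      rcases hvertv q hq with h | h
      · exact h
      · exact absurd (Or.inl h) hq'
    have hqa : q ≠ a := fun e => hq' (Or.inl (e.symm ▸ st.haV2))
    have hqb : q ≠ b := fun e => hq' (Or.inl (e.symm ▸ st.hbV2))
    have hqc : q ≠ c := fun e => hq' (Or.inr e)
    have hG1 : G1.Adj q p := st.adjA hqV1 hqa hqb hqc ((addEdge (G1 ⊔ G2) x c).adj_symm hpq)
    exact hup p hp (Or.inl (G1.edge_vert (G1.adj_symm hG1)))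
  · rintro ⟨β, hm⟩
    by_cases hall1 : ∀ u ∈ K33g.verts, ∃ p ∈ β u, p ∈ G1.verts ∪ {x}
    · exact hW1.2 (st.push K33g β hm hall1)
    by_cases hall2 : ∀ u ∈ K33g.verts, ∃ p ∈ β u, p ∈ G2.verts ∪ {c}
    · exact hW2.2 (st.symm.push K33g β (st.Hsym ▸ hm) hall2)
    push_neg at hall1 hall2
    obtain ⟨u, hu, hup⟩ := hall1
    obtain ⟨v, hv, hvp⟩ := hall2
    have hu6 : u < 6 := hu
    have hv6 : v < 6 := hv
    have hvertu : ∀ p ∈ β u, p ∈ G1.verts ∪ G2.verts := by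
      intro p hp
      have := (hm.1 u hu).2.1 (Finset.mem_coe.2 hp)
      rwa [st.Hverts] at this
    have hvertv : ∀ p ∈ β v, p ∈ G1.verts ∪ G2.verts := by
      intro p hp
      have := (hm.1 v hv).2.1 (Finset.mem_coe.2 hp)
      rwa [st.Hverts] at this
    have hne : u ≠ v := by
      rintro rfl
      obtain ⟨p, hp⟩ := (hm.1 u hu).1
      rcases hvertu p hp with h | h
      · exact hup p hp (Or.inl h)
      · exact hvp p hp (Or.inl h)
    have hnadj : ¬ K33g.Adj u v := by
      intro hadj
      obtain ⟨p, hp, q, hq, hpq⟩ := hm.2.2 u v hadj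
      have hq' := hvp q hq
      have hqV1 : q ∈ G1.verts := by
        rcases hvertv q hq with h | h
        · exact h
        · exact absurd (Or.inl h) hq'
      have hqa : q ≠ a := fun e => hq' (Or.inl (e.symm ▸ st.haV2))
      have hqb : q ≠ b := fun e => hq' (Or.inl (e.symm ▸ st.hbV2))
      have hqc : q ≠ c := fun e => hq' (Or.inr e)
      have hG1 : G1.Adj q p := st.adjA hqV1 hqa hqb hqc ((addEdge (G1 ⊔ G2) x c).adj_symm hpq)
      exact hup p hp (Or.inl (G1.edge_vert (G1.adj_symm hG1)))
    have hno : ¬ ((u < 3 ∧ 3 ≤ v ∧ v < 6) ∨ (v < 3 ∧ 3 ≤ u ∧ u < 6)) :=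
      fun hh => hnadj (K33_adj.2 hh)
    rcases (show (u < 3 ∧ v < 3) ∨ (3 ≤ u ∧ 3 ≤ v) by omega) with ⟨h1, h2⟩ | ⟨h1, h2⟩
    · have hm' := relabelModel hm
        (fun n => if n = 0 then v else if n = 1 then u else if n = 2 then 3 - u - v else n)
        (by intro w hw; beta_reduce; split_ifs <;> omega)
        (by intro w hw w' hw' h; beta_reduce at h; split_ifs at h <;> omega)
        (by intro w w' h
            refine K33_adj.2 ?_
            have := K33_adj.1 h
            beta_reduce
            split_ifs <;> omega)
      exact st.k33_continue _ hm' (fun p hp => hvp p hp) (fun p hp => hup p hp) hW1 hW2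
    · have hm' := relabelModel hm
        (fun n => if n = 0 then v else if n = 1 then u else if n = 2 then 12 - u - v else n - 3)
        (by intro w hw; beta_reduce; split_ifs <;> omega)
        (by intro w hw w' hw' h; beta_reduce at h; split_ifs at h <;> omega)
        (by intro w w' h
            refine K33_adj.2 ?_
            have := K33_adj.1 h
            beta_reduce
            split_ifs <;> omega)
      exact st.k33_continue _ hm' (fun p hp => hvp p hp) (fun p hp => hup p hp) hW1 hW2

end Setup
theorem glue_along_edge_planar_3trees (G1 G2 : FGraph) (h1 : IsKTree 3 G1)
    (h2 : IsKTree 3 G2) (hp1 : Planar G1) (hp2 : Planar G2) (a b c x : ℕ)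
    (hinter : G1.verts ∩ G2.verts = {a, b}) (hab : a ≠ b)
    (hab1 : G1.Adj a b) (hab2 : G2.Adj a b)
    (hf1 : IsFaceTriangle G1 a b c) (hf2 : IsFaceTriangle G2 a b x)
    (hc : c ∉ G2.verts) (hx : x ∉ G1.verts) :
    IsKTree 3 (addEdge (G1 ⊔ G2) x c) ∧ Planar (addEdge (G1 ⊔ G2) x c) := by
  have st : Setup G1 G2 a b c x :=
    ⟨hinter, hab1, hf1.2.1, hf1.2.2.1, hab2, hf2.2.1, hf2.2.2.1, hc, hx⟩
  exact ⟨partA_main G1 G2 h1 h2 a b c x hinter hab hab1 hab2 hf1.2.1 hf1.2.2.1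
      hf2.2.1 hf2.2.2.1 hc hx,
    st.partB_main (hf1.2.2.2 x hx) (hf2.2.2.2 c hc)⟩
end PartB
end

section
/- If P1 is a perfect elimination scheme witnessing that a graph H1 is a 3-tree, and P2 = x y z ... is a perfect elimination scheme witnessing that a vertex-disjoint graph H2 is a 3-tree starting with triangle xyz, then the concatenation P1 P2 is a perfect elimination scheme witnessing that the graph H1 ∪ H2 plus the edges xa, xb, xc, ya, yb, za (where abc is a triangle of H1) is a 3-tree. -/
open SimpleGraph

lemma addEdge_adj' (G : FGraph) (u v p q : ℕ) (huv : u ≠ v) :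
    (addEdge G u v).Adj p q ↔ G.Adj p q ∨ ((p = u ∧ q = v) ∨ (p = v ∧ q = u)) := by
  simp only [addEdge]
  show (G.Adj p q ∨ (p = u ∧ q = v ∧ u ≠ v) ∨ (p = v ∧ q = u ∧ u ≠ v)) ↔ _
  constructor
  · rintro (h | ⟨rfl, rfl, -⟩ | ⟨rfl, rfl, -⟩)
    · exact Or.inl h
    · exact Or.inr (Or.inl ⟨rfl, rfl⟩)
    · exact Or.inr (Or.inr ⟨rfl, rfl⟩)
  · rintro (h | ⟨rfl, rfl⟩ | ⟨rfl, rfl⟩)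
    · exact Or.inl h
    · exact Or.inr (Or.inl ⟨rfl, rfl, huv⟩)
    · exact Or.inr (Or.inr ⟨rfl, rfl, huv⟩)

set_option maxHeartbeats 4000000 in

theorem pes_concatenation (H1 H2 : FGraph) (P1 P2 : List ℕ) (x y z a b c : ℕ)
    (h1 : IsPESk 3 P1 H1) (h2 : IsPESk 3 P2 H2)
    (hdisj : Disjoint H1.verts H2.verts)
    (hP2 : ∃ rest : List ℕ, P2 = x :: y :: z :: rest)
    (hab : H1.Adj a b) (hbc : H1.Adj b c) (hac : H1.Adj a c) :
    IsPESk 3 (P1 ++ P2) (addEdge (addEdge (addEdge (addEdge (addEdge (addEdge (H1 ⊔ H2) x a) x b) x c) y a) y b) z a) := by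
  obtain ⟨rest, hrest⟩ := hP2
  obtain ⟨nd1, hv1, hl1, hcl1, hel1⟩ := h1
  obtain ⟨nd2, hv2, hl2, hcl2, hel2⟩ := h2
  set l := P1 ++ P2 with hl
  set E := addEdge (addEdge (addEdge (addEdge (addEdge (addEdge (H1 ⊔ H2) x a) x b) x c) y a) y b) z a with hE
  have memdisj : ∀ v, v ∈ P1 → v ∈ P2 → False := by
    intro v hv1' hv2'
    exact Set.disjoint_left.1 hdisj (by rw [hv1]; exact hv1') (by rw [hv2]; exact hv2')
  have ha : a ∈ P1 := by have := H1.edge_vert hab; rwa [hv1] at this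
  have hb : b ∈ P1 := by have := H1.edge_vert hab.symm; rwa [hv1] at this
  have hc : c ∈ P1 := by have := H1.edge_vert hac.symm; rwa [hv1] at this
  have hx : x ∈ P2 := by rw [hrest]; simp
  have hy : y ∈ P2 := by rw [hrest]; simp
  have hz : z ∈ P2 := by rw [hrest]; simp
  have nab : a ≠ b := (H1.adj_sub hab).ne
  have nbc : b ≠ c := (H1.adj_sub hbc).ne
  have nac : a ≠ c := (H1.adj_sub hac).ne
  have hxa : x ≠ a := fun e => memdisj a ha (e ▸ hx)
  have hxb : x ≠ b := fun e => memdisj b hb (e ▸ hx)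
  have hxc : x ≠ c := fun e => memdisj c hc (e ▸ hx)
  have hya : y ≠ a := fun e => memdisj a ha (e ▸ hy)
  have hyb : y ≠ b := fun e => memdisj b hb (e ▸ hy)
  have hza : z ≠ a := fun e => memdisj a ha (e ▸ hz)
  have hL2 : 3 ≤ P2.length := hl2
  have hx0 : P2.get ⟨0, by omega⟩ = x := by simp [hrest]
  have hy1 : P2.get ⟨1, by omega⟩ = y := by simp [hrest]
  have hz2 : P2.get ⟨2, by omega⟩ = z := by simp [hrest]
  have htxy : H2.Adj x y := by
    have := hcl2 ⟨0, by omega⟩ ⟨1, by omega⟩ (by norm_num) (by norm_num) (by simp [Fin.ext_iff])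
    rwa [hx0, hy1] at this
  have htxz : H2.Adj x z := by
    have := hcl2 ⟨0, by omega⟩ ⟨2, by omega⟩ (by norm_num) (by norm_num) (by simp [Fin.ext_iff])
    rwa [hx0, hz2] at this
  have htyz : H2.Adj y z := by
    have := hcl2 ⟨1, by omega⟩ ⟨2, by omega⟩ (by norm_num) (by norm_num) (by simp [Fin.ext_iff])
    rwa [hy1, hz2] at this
  have nxy : x ≠ y := (H2.adj_sub htxy).ne
  have nxz : x ≠ z := (H2.adj_sub htxz).ne
  have nyz : y ≠ z := (H2.adj_sub htyz).ne
  have llen : l.length = P1.length + P2.length := List.length_append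
  have ndl : l.Nodup := List.nodup_append.2 ⟨nd1, nd2, fun v hv w hw e => memdisj v hv (by subst e; exact hw)⟩
  have ginj : ∀ i j : Fin l.length, l.get i = l.get j → i = j :=
    fun i j h => (List.Nodup.get_inj_iff ndl).1 h
  have hadj : ∀ p q, E.Adj p q ↔ ((((((H1.Adj p q ∨ H2.Adj p q) ∨ ((p=x∧q=a)∨(p=a∧q=x))) ∨ ((p=x∧q=b)∨(p=b∧q=x))) ∨ ((p=x∧q=c)∨(p=c∧q=x))) ∨ ((p=y∧q=a)∨(p=a∧q=y))) ∨ ((p=y∧q=b)∨(p=b∧q=y))) ∨ ((p=z∧q=a)∨(p=a∧q=z)) := by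
    intro p q
    rw [hE, addEdge_adj' _ _ _ _ _ hza, addEdge_adj' _ _ _ _ _ hyb,
      addEdge_adj' _ _ _ _ _ hya, addEdge_adj' _ _ _ _ _ hxc,
      addEdge_adj' _ _ _ _ _ hxb, addEdge_adj' _ _ _ _ _ hxa,
      SimpleGraph.Subgraph.sup_adj]
  have hE1 : ∀ p q, H1.Adj p q → E.Adj p q := fun p q h =>
    (hadj p q).2 (Or.inl (Or.inl (Or.inl (Or.inl (Or.inl (Or.inl (Or.inl h)))))))
  have hE2 : ∀ p q, H2.Adj p q → E.Adj p q := fun p q h =>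
    (hadj p q).2 (Or.inl (Or.inl (Or.inl (Or.inl (Or.inl (Or.inl (Or.inr h)))))))
  have eax : E.Adj a x := (hadj a x).2 (Or.inl (Or.inl (Or.inl (Or.inl (Or.inl (Or.inr (Or.inr ⟨rfl, rfl⟩)))))))
  have ebx : E.Adj b x := (hadj b x).2 (Or.inl (Or.inl (Or.inl (Or.inl (Or.inr (Or.inr ⟨rfl, rfl⟩))))))
  have ecx : E.Adj c x := (hadj c x).2 (Or.inl (Or.inl (Or.inl (Or.inr (Or.inr ⟨rfl, rfl⟩)))))
  have eay : E.Adj a y := (hadj a y).2 (Or.inl (Or.inl (Or.inr (Or.inr ⟨rfl, rfl⟩))))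
  have eby : E.Adj b y := (hadj b y).2 (Or.inl (Or.inr (Or.inr ⟨rfl, rfl⟩)))
  have eaz : E.Adj a z := (hadj a z).2 (Or.inr (Or.inr ⟨rfl, rfl⟩))
  have eab : E.Adj a b := hE1 _ _ hab
  have ebc : E.Adj b c := hE1 _ _ hbc
  have eac : E.Adj a c := hE1 _ _ hac
  have exy : E.Adj x y := hE2 _ _ htxy
  have exz : E.Adj x z := hE2 _ _ htxz
  have eyz : E.Adj y z := hE2 _ _ htyz
  have hA11 : ∀ p, p ∈ P1 → ∀ q, q ∈ P1 → (E.Adj p q ↔ H1.Adj p q) := by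
    intro p hp q hq
    rw [hadj]
    have h2f : ¬ H2.Adj p q := fun h => memdisj p hp (by have := H2.edge_vert h; rwa [hv2] at this)
    have hpx : p ≠ x := fun e => memdisj p hp (e ▸ hx)
    have hpy : p ≠ y := fun e => memdisj p hp (e ▸ hy)
    have hpz : p ≠ z := fun e => memdisj p hp (e ▸ hz)
    have hqx : q ≠ x := fun e => memdisj q hq (e ▸ hx)
    have hqy : q ≠ y := fun e => memdisj q hq (e ▸ hy)
    have hqz : q ≠ z := fun e => memdisj q hq (e ▸ hz)
    simp [h2f, hpx, hpy, hpz, hqx, hqy, hqz]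
  have hA22 : ∀ p, p ∈ P2 → ∀ q, q ∈ P2 → (E.Adj p q ↔ H2.Adj p q) := by
    intro p hp q hq
    rw [hadj]
    have h1f : ¬ H1.Adj p q := fun h => memdisj p (by have := H1.edge_vert h; rwa [hv1] at this) hp
    have hpa : p ≠ a := fun e => memdisj a ha (e ▸ hp)
    have hpb : p ≠ b := fun e => memdisj b hb (e ▸ hp)
    have hpc : p ≠ c := fun e => memdisj c hc (e ▸ hp)
    have hqa : q ≠ a := fun e => memdisj a ha (e ▸ hq)
    have hqb : q ≠ b := fun e => memdisj b hb (e ▸ hq)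
    have hqc : q ≠ c := fun e => memdisj c hc (e ▸ hq)
    simp [h1f, hpa, hpb, hpc, hqa, hqb, hqc]
  have hA12 : ∀ p, p ∈ P1 → ∀ q, q ∈ P2 →
      (E.Adj p q ↔ (((((p = a ∧ q = x) ∨ (p = b ∧ q = x)) ∨ (p = c ∧ q = x)) ∨ (p = a ∧ q = y)) ∨ (p = b ∧ q = y)) ∨ (p = a ∧ q = z)) := by
    intro p hp q hq
    rw [hadj]
    have h1f : ¬ H1.Adj p q := fun h => memdisj q (by have := H1.edge_vert h.symm; rwa [hv1] at this) hq
    have h2f : ¬ H2.Adj p q := fun h => memdisj p hp (by have := H2.edge_vert h; rwa [hv2] at this)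
    have hpx : p ≠ x := fun e => memdisj p hp (e ▸ hx)
    have hpy : p ≠ y := fun e => memdisj p hp (e ▸ hy)
    have hpz : p ≠ z := fun e => memdisj p hp (e ▸ hz)
    have hqa : q ≠ a := fun e => memdisj a ha (e ▸ hq)
    have hqb : q ≠ b := fun e => memdisj b hb (e ▸ hq)
    have hqc : q ≠ c := fun e => memdisj c hc (e ▸ hq)
    constructor
    · rintro (((((((h | h) | h) | h) | h) | h) | h) | h)
      · exact absurd h h1f
      · exact absurd h h2f
      · rcases h with ⟨e, -⟩ | h
        · exact absurd e hpx
        · exact Or.inl (Or.inl (Or.inl (Or.inl (Or.inl h))))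
      · rcases h with ⟨e, -⟩ | h
        · exact absurd e hpx
        · exact Or.inl (Or.inl (Or.inl (Or.inl (Or.inr h))))
      · rcases h with ⟨e, -⟩ | h
        · exact absurd e hpx
        · exact Or.inl (Or.inl (Or.inl (Or.inr h)))
      · rcases h with ⟨e, -⟩ | h
        · exact absurd e hpy
        · exact Or.inl (Or.inl (Or.inr h))
      · rcases h with ⟨e, -⟩ | h
        · exact absurd e hpy
        · exact Or.inl (Or.inr h)
      · rcases h with ⟨e, -⟩ | h
        · exact absurd e hpz
        · exact Or.inr h
    · rintro (((((h | h) | h) | h) | h) | h)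
      · exact Or.inl (Or.inl (Or.inl (Or.inl (Or.inl (Or.inr (Or.inr h))))))
      · exact Or.inl (Or.inl (Or.inl (Or.inl (Or.inr (Or.inr h)))))
      · exact Or.inl (Or.inl (Or.inl (Or.inr (Or.inr h))))
      · exact Or.inl (Or.inl (Or.inr (Or.inr h)))
      · exact Or.inl (Or.inr (Or.inr h))
      · exact Or.inr (Or.inr h)
  have hgetl : ∀ (i : Fin l.length) (h : (i:ℕ) < P1.length), l.get i = P1.get ⟨i, h⟩ :=
    fun i h => List.getElem_append_left h
  have hgetr : ∀ (i : Fin l.length) (k : ℕ) (hk : k < P2.length),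
      (i:ℕ) = P1.length + k → l.get i = P2.get ⟨k, hk⟩ := by
    intro i k hk hik
    have e : (i:ℕ) - P1.length = k := by omega
    subst e
    exact List.getElem_append_right (by omega)
  have hgetl' : ∀ (k : ℕ) (h : k < P1.length) (h2 : k < l.length),
      l.get ⟨k, h2⟩ = P1.get ⟨k, h⟩ := fun k h h2 => List.getElem_append_left h
  have hgetr' : ∀ (k m : ℕ) (hm : m < P2.length) (h2 : k < l.length),
      k = P1.length + m → l.get ⟨k, h2⟩ = P2.get ⟨m, hm⟩ := by
    intro k m hm h2 hk
    have e : k - P1.length = m := by omega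
    subst e
    exact List.getElem_append_right (by omega)
  have getidx : ∀ v, v ∈ P1 → ∃ j : Fin l.length, (j:ℕ) < P1.length ∧ l.get j = v := by
    intro v hv
    obtain ⟨j', hj'⟩ := List.get_of_mem hv
    refine ⟨⟨j', by have h := j'.2; rw [llen]; omega⟩, j'.2, ?_⟩
    rw [hgetl' _ j'.2 _]
    exact hj'
  obtain ⟨ja, hjaL, hja⟩ := getidx a ha
  obtain ⟨jb, hjbL, hjb⟩ := getidx b hb
  obtain ⟨jc, hjcL, hjc⟩ := getidx c hc
  obtain ⟨jx, hjxv, hjx⟩ : ∃ j : Fin l.length, (j:ℕ) = P1.length ∧ l.get j = x := by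
    refine ⟨⟨P1.length, by rw [llen]; omega⟩, rfl, ?_⟩
    rw [hgetr' P1.length 0 (by omega) _ (by omega)]
    exact hx0
  obtain ⟨jy, hjyv, hjy⟩ : ∃ j : Fin l.length, (j:ℕ) = P1.length + 1 ∧ l.get j = y := by
    refine ⟨⟨P1.length + 1, by rw [llen]; omega⟩, rfl, ?_⟩
    rw [hgetr' _ 1 (by omega) _ rfl]
    exact hy1
  have hlen1 : P1.length ≤ l.length := by rw [llen]; omega
  have njab : ja ≠ jb := fun e => nab (by rw [← hja, ← hjb, e])
  have njac : ja ≠ jc := fun e => nac (by rw [← hja, ← hjc, e])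
  have njbc : jb ≠ jc := fun e => nbc (by rw [← hjb, ← hjc, e])
  have njax : ja ≠ jx := fun e => by
    have h := congrArg Fin.val e
    exact absurd h (by omega)
  have njbx : jb ≠ jx := fun e => by
    have h := congrArg Fin.val e
    exact absurd h (by omega)
  have njay : ja ≠ jy := fun e => by
    have h := congrArg Fin.val e
    exact absurd h (by omega)
  have njxy : jx ≠ jy := fun e => by
    have h := congrArg Fin.val e
    exact absurd h (by omega)
  refine ⟨ndl, ?_, ?_, ?_, ?_⟩
  · rw [hE]
    ext v
    simp only [addEdge, SimpleGraph.Subgraph.verts_sup, Set.mem_insert_iff, Set.mem_union,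
      hv1, hv2, Set.mem_setOf_eq, hl, List.mem_append]
    constructor
    · rintro (rfl | rfl | rfl | rfl | rfl | rfl | rfl | rfl | rfl | rfl | rfl | rfl | h | h)
      exacts [Or.inr hz, Or.inl ha, Or.inr hy, Or.inl hb, Or.inr hy, Or.inl ha, Or.inr hx,
        Or.inl hc, Or.inr hx, Or.inl hb, Or.inr hx, Or.inl ha, Or.inl h, Or.inr h]
    · intro h
      exact Or.inr (Or.inr (Or.inr (Or.inr (Or.inr (Or.inr (Or.inr (Or.inr (Or.inr (Or.inr
        (Or.inr (Or.inr h)))))))))))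
  · rw [llen]; omega
  · intro i j hi hj hij
    have hi' : (i:ℕ) < P1.length := by omega
    have hj' : (j:ℕ) < P1.length := by omega
    rw [hgetl i hi', hgetl j hj']
    refine hE1 _ _ (hcl1 ⟨i, hi'⟩ ⟨j, hj'⟩ hi hj ?_)
    intro e
    have h := Fin.ext_iff.1 e
    simp only at h
    exact hij (Fin.ext h)
  · intro i hi3
    by_cases hiL : (i:ℕ) < P1.length
    · obtain ⟨s1, hc1, hlt1, hclq1, hiff1⟩ := hel1 ⟨i, hiL⟩ hi3
      refine ⟨s1.map ⟨fun (j : Fin P1.length) =>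
          (⟨(j:ℕ), lt_of_lt_of_le j.2 hlen1⟩ : Fin l.length),
        fun j k e => by have h := Fin.ext_iff.1 e; exact Fin.ext h⟩, ?_, ?_, ?_, ?_⟩
      · rw [Finset.card_map]; exact hc1
      · intro j hj
        simp only [Finset.mem_map, Function.Embedding.coeFn_mk] at hj
        obtain ⟨j', hj', rfl⟩ := hj
        exact hlt1 j' hj'
      · intro p hp q hq hpq
        simp only [Finset.mem_map, Function.Embedding.coeFn_mk] at hp hq
        obtain ⟨p', hp', rfl⟩ := hp
        obtain ⟨q', hq', rfl⟩ := hq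
        show E.Adj (l.get ⟨(p':ℕ), _⟩) (l.get ⟨(q':ℕ), _⟩)
        rw [hgetl' _ p'.2 _, hgetl' _ q'.2 _]
        exact hE1 _ _ (hclq1 p' hp' q' hq' (fun e => hpq (by rw [e])))
      · intro j hj
        have hjL : (j:ℕ) < P1.length := by omega
        rw [hgetl j hjL, hgetl i hiL]
        refine Iff.trans (hA11 _ (List.get_mem _ _) _ (List.get_mem _ _))
          (Iff.trans (hiff1 ⟨j, hjL⟩ hj) ?_)
        simp only [Finset.mem_map, Function.Embedding.coeFn_mk]
        constructor
        · intro hm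
          exact ⟨⟨(j:ℕ), hjL⟩, hm, rfl⟩
        · rintro ⟨j', hj', e⟩
          have hv : (j':ℕ) = (j:ℕ) := Fin.ext_iff.1 e
          have h2 : (⟨(j:ℕ), hjL⟩ : Fin P1.length) = j' := Fin.ext (show (j:ℕ) = (j':ℕ) by omega)
          rwa [h2]
    · push_neg at hiL
      have him : (i:ℕ) - P1.length < P2.length := by have h := i.2; omega
      by_cases hm3 : P1.length + 3 ≤ (i:ℕ)
      · obtain ⟨s2, hc2, hlt2, hclq2, hiff2⟩ :=
          hel2 ⟨(i:ℕ) - P1.length, him⟩ (by show 3 ≤ (i:ℕ) - P1.length; omega)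
        refine ⟨s2.map ⟨fun (j : Fin P2.length) =>
            (⟨P1.length + (j:ℕ), by rw [llen]; exact Nat.add_lt_add_left j.2 P1.length⟩ : Fin l.length),
          fun j k e => Fin.ext (Nat.add_left_cancel
            (show P1.length + (j:ℕ) = P1.length + (k:ℕ) from Fin.ext_iff.1 e))⟩, ?_, ?_, ?_, ?_⟩
        · rw [Finset.card_map]; exact hc2
        · intro j hj
          simp only [Finset.mem_map, Function.Embedding.coeFn_mk] at hj
          obtain ⟨j', hj', rfl⟩ := hj
          have h' : (j':ℕ) < (i:ℕ) - P1.length := hlt2 j' hj'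
          show P1.length + (j':ℕ) < (i:ℕ)
          omega
        · intro p hp q hq hpq
          simp only [Finset.mem_map, Function.Embedding.coeFn_mk] at hp hq
          obtain ⟨p', hp', rfl⟩ := hp
          obtain ⟨q', hq', rfl⟩ := hq
          show E.Adj (l.get ⟨P1.length + (p':ℕ), _⟩) (l.get ⟨P1.length + (q':ℕ), _⟩)
          rw [hgetr' _ (p':ℕ) p'.2 _ rfl, hgetr' _ (q':ℕ) q'.2 _ rfl]
          exact hE2 _ _ (hclq2 p' hp' q' hq' (fun e => hpq (by rw [e])))
        · intro j hj
          rw [hgetr i ((i:ℕ) - P1.length) him (by omega)]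
          by_cases hjL : (j:ℕ) < P1.length
          · have hnx : P2.get ⟨(i:ℕ) - P1.length, him⟩ ≠ x := fun e => by
              have h0 : (i:ℕ) - P1.length = 0 :=
                Fin.ext_iff.1 ((List.Nodup.get_inj_iff nd2).1 (e.trans hx0.symm))
              omega
            have hny : P2.get ⟨(i:ℕ) - P1.length, him⟩ ≠ y := fun e => by
              have h0 : (i:ℕ) - P1.length = 1 :=
                Fin.ext_iff.1 ((List.Nodup.get_inj_iff nd2).1 (e.trans hy1.symm))
              omega
            have hnz : P2.get ⟨(i:ℕ) - P1.length, him⟩ ≠ z := fun e => by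
              have h0 : (i:ℕ) - P1.length = 2 :=
                Fin.ext_iff.1 ((List.Nodup.get_inj_iff nd2).1 (e.trans hz2.symm))
              omega
            rw [hgetl j hjL]
            refine Iff.trans (hA12 _ (List.get_mem _ _) _ (List.get_mem _ _)) ?_
            simp only [Finset.mem_map, Function.Embedding.coeFn_mk]
            constructor
            · rintro (((((⟨-, e⟩ | ⟨-, e⟩) | ⟨-, e⟩) | ⟨-, e⟩) | ⟨-, e⟩) | ⟨-, e⟩)
              exacts [absurd e hnx, absurd e hnx, absurd e hnx, absurd e hny, absurd e hny,
                absurd e hnz]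
            · rintro ⟨j', -, e⟩
              have h2 : P1.length + (j':ℕ) = (j:ℕ) := Fin.ext_iff.1 e
              exact absurd h2 (by omega)
          · push_neg at hjL
            have hjm : (j:ℕ) - P1.length < P2.length := by have h := j.2; omega
            rw [hgetr j ((j:ℕ) - P1.length) hjm (by omega)]
            refine Iff.trans (hA22 _ (List.get_mem _ _) _ (List.get_mem _ _))
              (Iff.trans (hiff2 ⟨(j:ℕ) - P1.length, hjm⟩
                (by show (j:ℕ) - P1.length < (i:ℕ) - P1.length; omega)) ?_)
            simp only [Finset.mem_map, Function.Embedding.coeFn_mk]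
            constructor
            · intro hm
              exact ⟨_, hm, Fin.ext (show P1.length + ((j:ℕ) - P1.length) = (j:ℕ) by omega)⟩
            · rintro ⟨j', hj', e⟩
              have h2 : P1.length + (j':ℕ) = (j:ℕ) := Fin.ext_iff.1 e
              have h3 : (⟨(j:ℕ) - P1.length, hjm⟩ : Fin P2.length) = j' :=
                Fin.ext (show (j:ℕ) - P1.length = (j':ℕ) by omega)
              rwa [h3]
      · push_neg at hm3
        rcases (by omega : (i:ℕ) = P1.length ∨ (i:ℕ) = P1.length + 1 ∨ (i:ℕ) = P1.length + 2)
          with ei | ei | ei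
        · have hgx : l.get i = x := by
            rw [hgetr i 0 (by omega) (by omega)]; exact hx0
          refine ⟨{ja, jb, jc}, ?_, ?_, ?_, ?_⟩
          · rw [Finset.card_insert_of_notMem (by simp [njab, njac]),
              Finset.card_insert_of_notMem (by simp [njbc]), Finset.card_singleton]
          · intro j hj
            simp only [Finset.mem_insert, Finset.mem_singleton] at hj
            rcases hj with rfl | rfl | rfl <;> omega
          · intro p hp q hq hpq
            simp only [Finset.mem_insert, Finset.mem_singleton] at hp hq
            rcases hp with rfl | rfl | rfl <;> rcases hq with rfl | rfl | rfl <;>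
              simp only [hja, hjb, hjc] <;>
              first
                | exact absurd rfl hpq
                | exact eab | exact eab.symm | exact ebc | exact ebc.symm
                | exact eac | exact eac.symm
          · intro j hj
            have hjL : (j:ℕ) < P1.length := by omega
            rw [hgx, hgetl j hjL]
            refine Iff.trans (hA12 _ (List.get_mem _ _) _ hx) ?_
            simp only [Finset.mem_insert, Finset.mem_singleton]
            constructor
            · rintro (((((⟨e, -⟩ | ⟨e, -⟩) | ⟨e, -⟩) | ⟨-, e⟩) | ⟨-, e⟩) | ⟨-, e⟩)
              · exact Or.inl (ginj j ja (by rw [hgetl j hjL, hja]; exact e))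
              · exact Or.inr (Or.inl (ginj j jb (by rw [hgetl j hjL, hjb]; exact e)))
              · exact Or.inr (Or.inr (ginj j jc (by rw [hgetl j hjL, hjc]; exact e)))
              · exact absurd e nxy
              · exact absurd e nxy
              · exact absurd e nxz
            · rintro (h | h | h)
              · exact Or.inl (Or.inl (Or.inl (Or.inl (Or.inl ⟨by rw [← hgetl j hjL, h, hja], trivial⟩))))
              · exact Or.inl (Or.inl (Or.inl (Or.inl (Or.inr ⟨by rw [← hgetl j hjL, h, hjb], trivial⟩))))
              · exact Or.inl (Or.inl (Or.inl (Or.inr ⟨by rw [← hgetl j hjL, h, hjc], trivial⟩)))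
        · have hgy : l.get i = y := by
            rw [hgetr i 1 (by omega) (by omega)]; exact hy1
          refine ⟨{ja, jb, jx}, ?_, ?_, ?_, ?_⟩
          · rw [Finset.card_insert_of_notMem (by simp [njab, njax]),
              Finset.card_insert_of_notMem (by simp [njbx]), Finset.card_singleton]
          · intro j hj
            simp only [Finset.mem_insert, Finset.mem_singleton] at hj
            rcases hj with rfl | rfl | rfl <;> omega
          · intro p hp q hq hpq
            simp only [Finset.mem_insert, Finset.mem_singleton] at hp hq
            rcases hp with rfl | rfl | rfl <;> rcases hq with rfl | rfl | rfl <;>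
              simp only [hja, hjb, hjx] <;>
              first
                | exact absurd rfl hpq
                | exact eab | exact eab.symm | exact eax | exact eax.symm
                | exact ebx | exact ebx.symm
          · intro j hj
            by_cases hjL : (j:ℕ) < P1.length
            · rw [hgy, hgetl j hjL]
              refine Iff.trans (hA12 _ (List.get_mem _ _) _ hy) ?_
              simp only [Finset.mem_insert, Finset.mem_singleton]
              constructor
              · rintro (((((⟨-, e⟩ | ⟨-, e⟩) | ⟨-, e⟩) | ⟨e, -⟩) | ⟨e, -⟩) | ⟨-, e⟩)
                · exact absurd e.symm nxy
                · exact absurd e.symm nxy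
                · exact absurd e.symm nxy
                · exact Or.inl (ginj j ja (by rw [hgetl j hjL, hja]; exact e))
                · exact Or.inr (Or.inl (ginj j jb (by rw [hgetl j hjL, hjb]; exact e)))
                · exact absurd e nyz
              · rintro (h | h | h)
                · exact Or.inl (Or.inl (Or.inr ⟨by rw [← hgetl j hjL, h, hja], trivial⟩))
                · exact Or.inl (Or.inr ⟨by rw [← hgetl j hjL, h, hjb], trivial⟩)
                · have hv : (j:ℕ) = (jx:ℕ) := congrArg Fin.val h
                  exact absurd hjL (by omega)
            · have hjeq : j = jx := Fin.ext (by omega)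
              rw [hjeq, hjx, hgy]
              simp only [Finset.mem_insert, Finset.mem_singleton]
              constructor
              · intro _
                exact Or.inr (Or.inr trivial)
              · intro _
                exact exy
        · have hgz : l.get i = z := by
            rw [hgetr i 2 (by omega) (by omega)]; exact hz2
          refine ⟨{ja, jx, jy}, ?_, ?_, ?_, ?_⟩
          · rw [Finset.card_insert_of_notMem (by simp [njax, njay]),
              Finset.card_insert_of_notMem (by simp [njxy]), Finset.card_singleton]
          · intro j hj
            simp only [Finset.mem_insert, Finset.mem_singleton] at hj
            rcases hj with rfl | rfl | rfl <;> omega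
          · intro p hp q hq hpq
            simp only [Finset.mem_insert, Finset.mem_singleton] at hp hq
            rcases hp with rfl | rfl | rfl <;> rcases hq with rfl | rfl | rfl <;>
              simp only [hja, hjx, hjy] <;>
              first
                | exact absurd rfl hpq
                | exact eax | exact eax.symm | exact eay | exact eay.symm
                | exact exy | exact exy.symm
          · intro j hj
            by_cases hjL : (j:ℕ) < P1.length
            · rw [hgz, hgetl j hjL]
              refine Iff.trans (hA12 _ (List.get_mem _ _) _ hz) ?_
              simp only [Finset.mem_insert, Finset.mem_singleton]
              constructor
              · rintro (((((⟨-, e⟩ | ⟨-, e⟩) | ⟨-, e⟩) | ⟨-, e⟩) | ⟨-, e⟩) | ⟨e, -⟩)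
                · exact absurd e.symm nxz
                · exact absurd e.symm nxz
                · exact absurd e.symm nxz
                · exact absurd e.symm nyz
                · exact absurd e.symm nyz
                · exact Or.inl (ginj j ja (by rw [hgetl j hjL, hja]; exact e))
              · rintro (h | h | h)
                · exact Or.inr ⟨by rw [← hgetl j hjL, h, hja], trivial⟩
                · have hv : (j:ℕ) = (jx:ℕ) := congrArg Fin.val h
                  exact absurd hjL (by omega)
                · have hv : (j:ℕ) = (jy:ℕ) := congrArg Fin.val h
                  exact absurd hjL (by omega)
            · by_cases hjL2 : (j:ℕ) = P1.length
              · have hjeq : j = jx := Fin.ext (by omega)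
                rw [hjeq, hjx, hgz]
                simp only [Finset.mem_insert, Finset.mem_singleton]
                constructor
                · intro _
                  exact Or.inr (Or.inl trivial)
                · intro _
                  exact exz
              · have hjeq : j = jy := Fin.ext (by omega)
                rw [hjeq, hjy, hgz]
                simp only [Finset.mem_insert, Finset.mem_singleton]
                constructor
                · intro _
                  exact Or.inr (Or.inr trivial)
                · intro _
                  exact eyz
end
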